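/- Let X be a real normed space in which for some q ∈ (0,1], the inequality ‖x/‖x‖ − y/‖y‖‖ ≤ 2^{1/q}·‖x−y‖/(‖x‖^q + ‖y‖^q)^{1/q} holds for all nonzero x, y ∈ X. Then X is an inner product space (the norm satisfies the parallelogram law). -/

import Mathlib

set_option maxHeartbeats 1000000

namespace AlRashed

noncomputable section

open Set

/-- Bundle of hypotheses about the induced 2D "norm". -/
structure GoodNorm (N : ℝ × ℝ → ℝ) : Prop where
  tri : ∀ a b, N (a + b) ≤ N a + N b
  hom : ∀ (c : ℝ) (a), N (c • a) = |c| * N a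
  dfn : ∀ a, N a = 0 → a = 0
  B : ∀ a b, N a = N b → ∀ t : ℝ, N (a + b) ≤ N (a + b + t • (a - b))

theorem GoodNorm.zero {N} (hN : GoodNorm N) : N 0 = 0 := by
  have := hN.hom 0 0
  simpa using this

theorem GoodNorm.nonneg {N} (hN : GoodNorm N) (a : ℝ × ℝ) : 0 ≤ N a := by
  have h0 : N 0 ≤ N a + N (-a) := by
    have := hN.tri a (-a); simpa using this
  have hneg : N (-a) = N a := by
    have := hN.hom (-1) a; simpa using this
  rw [hN.zero, hneg] at h0; linarith

theorem GoodNorm.neg {N} (hN : GoodNorm N) (a : ℝ × ℝ) : N (-a) = N a := by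
  have := hN.hom (-1) a; simpa using this

theorem GoodNorm.pos {N} (hN : GoodNorm N) {a : ℝ × ℝ} (ha : a ≠ 0) : 0 < N a := by
  rcases lt_or_eq_of_le (hN.nonneg a) with h | h
  · exact h
  · exact absurd (hN.dfn a h.symm) ha

/-! ### Plane linear algebra helpers -/

/-- 2x2 determinant of a pair of plane vectors. -/
def det2 (a b : ℝ × ℝ) : ℝ := a.1 * b.2 - a.2 * b.1

theorem det2_swap (a b : ℝ × ℝ) : det2 a b = - det2 b a := by
  simp [det2]; ring

theorem det2_self (a : ℝ × ℝ) : det2 a a = 0 := by simp [det2]; ring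

theorem det2_add_right (a b c : ℝ × ℝ) : det2 a (b + c) = det2 a b + det2 a c := by
  simp [det2]; ring

theorem det2_smul_right (a : ℝ × ℝ) (c : ℝ) (b : ℝ × ℝ) :
    det2 a (c • b) = c * det2 a b := by
  simp [det2]; ring

theorem det2_smul_left (a : ℝ × ℝ) (c : ℝ) (b : ℝ × ℝ) :
    det2 (c • a) b = c * det2 a b := by
  simp [det2]; ring

theorem det2_add_left (a b c : ℝ × ℝ) : det2 (a + b) c = det2 a c + det2 b c := by
  simp [det2]; ring

/-- If `det2 a w = 0` and `w ≠ 0` then `a` is a multiple of `w`. -/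
theorem parallel_of_det2 {a w : ℝ × ℝ} (h : det2 a w = 0) (hw : w ≠ 0) :
    ∃ c : ℝ, a = c • w := by
  have h' : a.1 * w.2 - a.2 * w.1 = 0 := h
  by_cases h1 : w.1 = 0
  · have h2 : w.2 ≠ 0 := fun h2 => hw (Prod.ext h1 h2)
    have ha1 : a.1 = 0 := by
      have hh : a.1 * w.2 = 0 := by rw [h1] at h'; linarith
      exact (mul_eq_zero.mp hh).resolve_right h2
    refine ⟨a.2 / w.2, Prod.ext ?_ ?_⟩
    · simp [ha1, h1]
    · simp only [Prod.smul_snd, smul_eq_mul]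
      field_simp
  · refine ⟨a.1 / w.1, Prod.ext ?_ ?_⟩
    · simp only [Prod.smul_fst, smul_eq_mul]
      field_simp
    · simp only [Prod.smul_snd, smul_eq_mul]
      rw [div_mul_eq_mul_div, eq_div_iff h1]
      linarith

/-- Cramer decomposition w.r.t. a basis `p, q`. -/
theorem cramer {p q : ℝ × ℝ} (hd : det2 p q ≠ 0) (v : ℝ × ℝ) :
    v = (det2 v q / det2 p q) • p + (det2 p v / det2 p q) • q := by
  apply Prod.ext <;> simp only [det2, Prod.smul_fst, Prod.smul_snd, Prod.fst_add, Prod.snd_add, smul_eq_mul] at hd ⊢ <;>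
    rw [div_mul_eq_mul_div, div_mul_eq_mul_div, ← add_div, eq_div_iff hd] <;> ring

/-! ### Basic norm estimates -/

theorem GoodNorm.comb {N} (hN : GoodNorm N) (s t : ℝ) (hs : 0 ≤ s) (ht : 0 ≤ t)
    (a b : ℝ × ℝ) : N (s • a + t • b) ≤ s * N a + t * N b := by
  calc N (s • a + t • b) ≤ N (s • a) + N (t • b) := hN.tri _ _
    _ = s * N a + t * N b := by
        rw [hN.hom, hN.hom, abs_of_nonneg hs, abs_of_nonneg ht]

theorem coords_decomp (z : ℝ × ℝ) :
    z = z.1 • ((1:ℝ), (0:ℝ)) + z.2 • ((0:ℝ), (1:ℝ)) := by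
  apply Prod.ext <;> simp

theorem GoodNorm.upper {N} (hN : GoodNorm N) (z : ℝ × ℝ) :
    N z ≤ ‖z‖ * (N (1, 0) + N (0, 1)) := by
  calc N z = N (z.1 • ((1:ℝ), (0:ℝ)) + z.2 • ((0:ℝ), (1:ℝ))) := by
        rw [← coords_decomp]
    _ ≤ N (z.1 • ((1:ℝ), (0:ℝ))) + N (z.2 • ((0:ℝ), (1:ℝ))) := hN.tri _ _
    _ = |z.1| * N (1, 0) + |z.2| * N (0, 1) := by rw [hN.hom, hN.hom]
    _ ≤ ‖z‖ * N (1, 0) + ‖z‖ * N (0, 1) := by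
        have h1 : |z.1| ≤ ‖z‖ := by
          have := norm_fst_le z; simpa using this
        have h2 : |z.2| ≤ ‖z‖ := by
          have := norm_snd_le z; simpa using this
        have n1 : 0 ≤ N (1, 0) := hN.nonneg _
        have n2 : 0 ≤ N (0, 1) := hN.nonneg _
        nlinarith
    _ = ‖z‖ * (N (1, 0) + N (0, 1)) := by ring

theorem GoodNorm.abs_sub_le {N} (hN : GoodNorm N) (a b : ℝ × ℝ) :
    |N a - N b| ≤ N (a - b) := by
  rw [abs_le]
  constructor
  · have : N b ≤ N a + N (b - a) := by
      have := hN.tri a (b - a); simpa using this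
    have hnn : N (b - a) = N (a - b) := by
      rw [show b - a = -(a-b) by ring, hN.neg]
    linarith [hnn ▸ this]
  · have : N a ≤ N b + N (a - b) := by
      have := hN.tri b (a - b); simpa using this
    linarith

theorem GoodNorm.continuous {N} (hN : GoodNorm N) : Continuous N := by
  set K : ℝ := N (1, 0) + N (0, 1) with hK
  have hK0 : 0 ≤ K := by
    have := hN.nonneg ((1:ℝ), (0:ℝ)); have := hN.nonneg ((0:ℝ), (1:ℝ)); simp [hK]; linarith
  have : LipschitzWith (Real.toNNReal K) N := by
    apply LipschitzWith.of_dist_le_mul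
    intro a b
    rw [Real.dist_eq, Real.coe_toNNReal K hK0, dist_eq_norm]
    calc |N a - N b| ≤ N (a - b) := hN.abs_sub_le a b
      _ ≤ ‖a - b‖ * K := hN.upper _
      _ = K * ‖a - b‖ := by ring
  exact this.continuous

/-- Uniform lower bound: the norm dominates a multiple of the sup norm. -/
theorem GoodNorm.lower {N} (hN : GoodNorm N) :
    ∃ c : ℝ, 0 < c ∧ ∀ z, c * ‖z‖ ≤ N z := by
  have hsc : IsCompact (Metric.sphere (0 : ℝ × ℝ) 1) := isCompact_sphere _ _
  have hne : (Metric.sphere (0 : ℝ × ℝ) 1).Nonempty := by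
    refine ⟨((1:ℝ), (0:ℝ)), ?_⟩
    simp [Prod.norm_def]
  obtain ⟨zm, hzm, hmin⟩ := hsc.exists_isMinOn hne hN.continuous.continuousOn
  have hzm1 : ‖zm‖ = 1 := by simpa using hzm
  have hzmne : zm ≠ 0 := by
    intro h0; rw [h0] at hzm1; simp at hzm1
  refine ⟨N zm, hN.pos hzmne, ?_⟩
  intro z
  by_cases hz : z = 0
  · subst hz; simp [hN.zero]
  · have hznorm : (0:ℝ) < ‖z‖ := norm_pos_iff.mpr hz
    set u := ‖z‖⁻¹ • z with hu
    have hu1 : ‖u‖ = 1 := by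
      rw [hu, norm_smul, norm_inv, norm_norm, inv_mul_cancel₀ (ne_of_gt hznorm)]
    have humem : u ∈ Metric.sphere (0 : ℝ × ℝ) 1 := by simp [hu1]
    have h1 : N zm ≤ N u := hmin humem
    have h2 : N z = ‖z‖ * N u := by
      have hzu : z = ‖z‖ • u := by
        rw [hu, smul_smul, mul_inv_cancel₀ (ne_of_gt hznorm), one_smul]
      nth_rewrite 1 [hzu]
      rw [hN.hom, abs_of_pos hznorm]
    rw [h2]
    nlinarith

/-! ### Birkhoff orthogonality and reflections -/

/-- Birkhoff orthogonality: the norm along the line through `z` in direction `w`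
is minimized at `z`. -/
def Birk (N : ℝ × ℝ → ℝ) (z w : ℝ × ℝ) : Prop := ∀ t : ℝ, N z ≤ N (z + t • w)

/-- Unit segment on the sphere. -/
def UnitSeg (N : ℝ × ℝ → ℝ) (p q : ℝ × ℝ) : Prop :=
  p ≠ q ∧ ∀ l : ℝ, 0 ≤ l → l ≤ 1 → N (p + l • (q - p)) = 1

/-- A good direction: no unit segment is parallel to `w`. -/
def GoodDir (N : ℝ × ℝ → ℝ) (w : ℝ × ℝ) : Prop :=
  w ≠ 0 ∧ ∀ p q, UnitSeg N p q → det2 (q - p) w ≠ 0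

theorem GoodNorm.exists_birk {N} (hN : GoodNorm N) {w : ℝ × ℝ} (hw : w ≠ 0) :
    ∃ z, N z = 1 ∧ Birk N z w ∧ det2 z w ≠ 0 := by
  obtain ⟨c, hc, hcle⟩ := hN.lower
  set z₀ : ℝ × ℝ := (-w.2, w.1) with hz₀
  have hdz₀ : det2 z₀ w ≠ 0 := by
    simp only [det2, hz₀]
    have : ¬ (w.1 = 0 ∧ w.2 = 0) := by
      intro ⟨h1, h2⟩; exact hw (Prod.ext h1 h2)
    intro hcon
    apply this
    constructor <;> nlinarith [sq_nonneg w.1, sq_nonneg w.2]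
  have hwnorm : (0:ℝ) < ‖w‖ := norm_pos_iff.mpr hw
  set φ : ℝ → ℝ := fun t => N (z₀ + t • w) with hφ
  have hφcont : Continuous φ := by
    apply hN.continuous.comp
    continuity
  set R : ℝ := (N z₀ / c + ‖z₀‖) / ‖w‖ + 1 with hR
  have hRpos : 0 < R := by
    have h1 : 0 ≤ N z₀ / c := div_nonneg (hN.nonneg _) (le_of_lt hc)
    have h2 : (0:ℝ) ≤ ‖z₀‖ := norm_nonneg _
    have h3 : 0 ≤ (N z₀ / c + ‖z₀‖) / ‖w‖ := div_nonneg (by linarith) (le_of_lt hwnorm)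
    rw [hR]; linarith
  have hout : ∀ t : ℝ, R < |t| → φ 0 < φ t := by
    intro t ht
    have h1 : ‖t • w‖ ≤ ‖z₀ + t • w‖ + ‖z₀‖ := by
      have := norm_add_le (z₀ + t • w) (-z₀)
      simpa using this
    have h2 : c * ‖z₀ + t • w‖ ≤ φ t := hcle _
    have h3 : ‖t • w‖ = |t| * ‖w‖ := by rw [norm_smul, Real.norm_eq_abs]
    have h4 : (N z₀ / c + ‖z₀‖) / ‖w‖ < |t| := by
      calc (N z₀ / c + ‖z₀‖) / ‖w‖ ≤ R - 1 + 1 - 1 := by rw [hR]; ring_nf; linarith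
        _ < |t| := by linarith
    have h5 : N z₀ / c + ‖z₀‖ < |t| * ‖w‖ := by
      rw [div_lt_iff₀ hwnorm] at h4; linarith
    have hφ0 : φ 0 = N z₀ := by simp [hφ]
    rw [hφ0]
    have h6 : N z₀ / c < ‖z₀ + t • w‖ := by
      rw [h3] at h1; linarith
    have h7 : N z₀ < c * ‖z₀ + t • w‖ := by
      rw [div_lt_iff₀' hc] at h6; linarith [h6]
    linarith
  obtain ⟨t₁, ht₁mem, ht₁min⟩ := isCompact_Icc.exists_isMinOn
    (Set.nonempty_Icc.mpr (by linarith : -R ≤ R)) hφcont.continuousOn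
  have hglobal : ∀ t : ℝ, φ t₁ ≤ φ t := by
    intro t
    by_cases htR : |t| ≤ R
    · exact ht₁min (by rw [Set.mem_Icc, ← abs_le]; exact htR)
    · push_neg at htR
      have h0mem : (0:ℝ) ∈ Set.Icc (-R) R := by
        rw [Set.mem_Icc]; constructor <;> linarith
      calc φ t₁ ≤ φ 0 := ht₁min h0mem
        _ ≤ φ t := le_of_lt (hout t htR)
  have hne : z₀ + t₁ • w ≠ 0 := by
    intro h0
    apply hdz₀
    have : det2 (z₀ + t₁ • w) w = det2 z₀ w := by
      rw [det2_add_left, det2_smul_left, det2_self]; ring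
    rw [← this, h0]
    simp [det2]
  have hμpos : 0 < φ t₁ := hN.pos hne
  refine ⟨(φ t₁)⁻¹ • (z₀ + t₁ • w), ?_, ?_, ?_⟩
  · rw [hN.hom, abs_of_pos (inv_pos.mpr hμpos)]
    field_simp
    rfl
  · intro t
    have hμne : φ t₁ ≠ 0 := ne_of_gt hμpos
    have e1 : (φ t₁)⁻¹ • (z₀ + t₁ • w) + t • w = (φ t₁)⁻¹ • (z₀ + (t₁ + φ t₁ * t) • w) := by
      apply Prod.ext <;>
        simp only [Prod.smul_fst, Prod.smul_snd, Prod.fst_add, Prod.snd_add, smul_eq_mul] <;>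
        field_simp <;> ring
    rw [e1, hN.hom, hN.hom, abs_of_pos (inv_pos.mpr hμpos)]
    have := hglobal (t₁ + φ t₁ * t)
    have hφeq : N (z₀ + (t₁ + φ t₁ * t) • w) = φ (t₁ + φ t₁ * t) := rfl
    rw [hφeq]
    have hφt₁ : N (z₀ + t₁ • w) = φ t₁ := rfl
    rw [hφt₁]
    have hinv : 0 ≤ (φ t₁)⁻¹ := le_of_lt (inv_pos.mpr hμpos)
    exact mul_le_mul_of_nonneg_left this hinv
  · rw [det2_smul_left]
    have : det2 (z₀ + t₁ • w) w = det2 z₀ w := by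
      rw [det2_add_left, det2_smul_left, det2_self]; ring
    rw [this]
    exact mul_ne_zero (ne_of_gt (inv_pos.mpr hμpos)) hdz₀

theorem GoodNorm.birk_shift {N} (hN : GoodNorm N) {w z zz : ℝ × ℝ}
    (hw : GoodDir N w) (hz : N z = 1) (hzz : N zz = 1) (hb : Birk N z w)
    {β : ℝ} (he : zz = z + β • w) : zz = z := by
  by_contra hne
  have hseg : UnitSeg N z zz := by
    refine ⟨fun h => hne h.symm, ?_⟩
    intro l hl0 hl1
    have hpt : z + l • (zz - z) = z + (l * β) • w := by rw [he]; module
    rw [hpt]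
    have hge : 1 ≤ N (z + (l * β) • w) := by rw [← hz]; exact hb (l * β)
    have hle : N (z + (l * β) • w) ≤ 1 := by
      have hcomb := hN.comb (1 - l) l (by linarith) hl0 z zz
      have hvec : (1 - l) • z + l • zz = z + (l * β) • w := by rw [he]; module
      rw [hvec, hz, hzz] at hcomb
      linarith
    linarith
  apply hw.2 z zz hseg
  rw [show zz - z = β • w by rw [he]; module, det2_smul_left, det2_self]
  ring

theorem GoodNorm.birk_parallel {N} (hN : GoodNorm N) {w z : ℝ × ℝ} (hw : w ≠ 0)
    (hz : N z = 1) (hb : Birk N z w) : det2 z w ≠ 0 := by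
  intro hd
  obtain ⟨c, hc⟩ := parallel_of_det2 hd hw
  have hb2 := hb (-c)
  have h0 : z + (-c) • w = 0 := by rw [hc]; module
  rw [h0, hN.zero, hz] at hb2
  linarith

theorem GoodNorm.birk_unique {N} (hN : GoodNorm N) {w : ℝ × ℝ} (hw : GoodDir N w)
    {z z' : ℝ × ℝ} (hz : N z = 1) (hz' : N z' = 1) (hb : Birk N z w)
    (hb' : Birk N z' w) : z' = z ∨ z' = -z := by
  have hw0 := hw.1
  have hdz : det2 z w ≠ 0 := hN.birk_parallel hw0 hz hb
  have hdz' : det2 z' w ≠ 0 := hN.birk_parallel hw0 hz' hb'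
  have hdecomp := cramer hdz z'
  set α := det2 z' w / det2 z w with hαdef
  set β := det2 z z' / det2 z w with hβdef
  have hα : α ≠ 0 := div_ne_zero hdz' hdz
  have habs_le : |α| ≤ 1 := by
    have hvec : z' = α • (z + (α⁻¹ * β) • w) := by
      rw [hdecomp]
      apply Prod.ext <;>
        simp only [Prod.smul_fst, Prod.smul_snd, Prod.fst_add, Prod.snd_add,
          smul_eq_mul] <;> field_simp <;> ring
    have heq : N z' = |α| * N (z + (α⁻¹ * β) • w) := by
      nth_rewrite 1 [hvec]; rw [hN.hom]
    have h1 : 1 ≤ N (z + (α⁻¹ * β) • w) := by rw [← hz]; exact hb _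
    rw [hz'] at heq
    nlinarith [abs_nonneg α]
  have habs_ge : 1 ≤ |α| := by
    have hvec0 : z' + (-β) • w = α • z := by rw [hdecomp]; module
    have hvec2 : z = α⁻¹ • (z' + (-β) • w) := by
      rw [hvec0, smul_smul, inv_mul_cancel₀ hα, one_smul]
    have heq : (1:ℝ) = |α|⁻¹ * N (z' + (-β) • w) := by
      rw [← hz]; nth_rewrite 1 [hvec2]; rw [hN.hom, abs_inv]
    have h1 : 1 ≤ N (z' + (-β) • w) := by rw [← hz']; exact hb' _
    have habspos : 0 < |α| := abs_pos.mpr hα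
    have hY : |α| * (|α|⁻¹ * N (z' + (-β) • w)) = N (z' + (-β) • w) := by
      field_simp
    rw [← heq, mul_one] at hY
    linarith
  have habs : |α| = 1 := le_antisymm habs_le habs_ge
  rcases (abs_eq (by norm_num : (0:ℝ) ≤ 1)).mp habs with hα1 | hα1
  · left
    rw [hα1, one_smul] at hdecomp
    exact hN.birk_shift hw hz hz' hb hdecomp
  · right
    have hzneg : N (-z') = 1 := by rw [hN.neg]; exact hz'
    have hbneg : Birk N (-z') w := by
      intro t
      calc N (-z') = N z' := hN.neg z'
        _ ≤ N (z' + (-t) • w) := hb' (-t)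
        _ = N (-z' + t • w) := by
            rw [show -z' + t • w = -(z' + (-t) • w) by module, hN.neg]
    have he : -z' = z + (-β) • w := by rw [hdecomp, hα1]; module
    have := hN.birk_shift hw hz hzneg hb he
    rw [← this, neg_neg]

/-! ### Reflections -/

/-- Second coordinate of `v` in the basis `(z, w)`. -/
def bcoord (z w v : ℝ × ℝ) : ℝ := det2 z v / det2 z w

/-- Linear reflection fixing `z` and negating `w`. -/
def refl2 (z w v : ℝ × ℝ) : ℝ × ℝ := v - (2 * bcoord z w v) • w

theorem bcoord_w {z w : ℝ × ℝ} (hd : det2 z w ≠ 0) : bcoord z w w = 1 :=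
  div_self hd

theorem bcoord_self (z w : ℝ × ℝ) : bcoord z w z = 0 := by
  simp [bcoord, det2_self]

theorem bcoord_add (z w a b : ℝ × ℝ) :
    bcoord z w (a + b) = bcoord z w a + bcoord z w b := by
  simp only [bcoord, det2_add_right]
  rw [add_div]

theorem bcoord_sub (z w a b : ℝ × ℝ) :
    bcoord z w (a - b) = bcoord z w a - bcoord z w b := by
  simp only [bcoord]
  rw [show det2 z (a - b) = det2 z a - det2 z b by simp [det2]; ring, sub_div]

theorem bcoord_smul (z w : ℝ × ℝ) (c : ℝ) (v : ℝ × ℝ) :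
    bcoord z w (c • v) = c * bcoord z w v := by
  simp only [bcoord, det2_smul_right]
  rw [mul_div_assoc]

theorem bcoord_zero (z w : ℝ × ℝ) : bcoord z w 0 = 0 := by
  have : bcoord z w ((0:ℝ) • (0:ℝ×ℝ)) = 0 * bcoord z w 0 := bcoord_smul z w 0 0
  simpa using this

theorem refl2_add (z w a b : ℝ × ℝ) :
    refl2 z w (a + b) = refl2 z w a + refl2 z w b := by
  simp only [refl2, bcoord_add]
  module

theorem refl2_smul (z w : ℝ × ℝ) (c : ℝ) (v : ℝ × ℝ) :
    refl2 z w (c • v) = c • refl2 z w v := by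
  simp only [refl2, bcoord_smul]
  module

theorem refl2_z (z w : ℝ × ℝ) : refl2 z w z = z := by
  simp [refl2, bcoord_self]

theorem refl2_w {z w : ℝ × ℝ} (hd : det2 z w ≠ 0) : refl2 z w w = -w := by
  simp only [refl2, bcoord_w hd]
  module

theorem refl2_invol {z w : ℝ × ℝ} (hd : det2 z w ≠ 0) (v : ℝ × ℝ) :
    refl2 z w (refl2 z w v) = v := by
  have h1 : bcoord z w (v - (2 * bcoord z w v) • w) = - bcoord z w v := by
    rw [bcoord_sub, bcoord_smul, bcoord_w hd]; ring
  show (v - (2 * bcoord z w v) • w) - (2 * bcoord z w (v - (2 * bcoord z w v) • w)) • w = v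
  rw [h1]
  module

theorem refl2_zero (z w : ℝ × ℝ) : refl2 z w 0 = 0 := by
  simp [refl2, bcoord_zero]

/-- Key application of property (B): the sum of two unit vectors differing by a
multiple of `w` is Birkhoff-orthogonal to `w`. -/
theorem GoodNorm.sum_birk {N} (hN : GoodNorm N) {w a b : ℝ × ℝ} {c : ℝ}
    (ha : N a = 1) (hb : N b = 1) (hab : b = a + c • w) (hc : c ≠ 0) :
    Birk N (a + b) w := by
  intro t
  have key := hN.B a b (by rw [ha, hb]) (-t / c)
  have hvec : a + b + (-t / c) • (a - b) = a + b + t • w := by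
    rw [hab]
    apply Prod.ext <;>
      simp only [Prod.smul_fst, Prod.smul_snd, Prod.fst_add, Prod.snd_add,
        Prod.fst_sub, Prod.snd_sub, smul_eq_mul] <;> field_simp <;> ring
  rwa [hvec] at key

/-- Normalized version of a Birkhoff-orthogonal vector. -/
theorem GoodNorm.birk_normalize {N} (hN : GoodNorm N) {w s : ℝ × ℝ}
    (hs : s ≠ 0) (hbs : Birk N s w) :
    N ((N s)⁻¹ • s) = 1 ∧ Birk N ((N s)⁻¹ • s) w := by
  have hm : 0 < N s := hN.pos hs
  have hmne : N s ≠ 0 := ne_of_gt hm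
  have h1 : N ((N s)⁻¹ • s) = 1 := by
    rw [hN.hom, abs_of_pos (inv_pos.mpr hm)]
    field_simp
  refine ⟨h1, ?_⟩
  intro t
  have hvec : (N s)⁻¹ • s + t • w = (N s)⁻¹ • (s + (N s * t) • w) := by
    apply Prod.ext <;>
      simp only [Prod.smul_fst, Prod.smul_snd, Prod.fst_add, Prod.snd_add,
        smul_eq_mul] <;> field_simp <;> ring
  rw [h1, hvec, hN.hom, abs_of_pos (inv_pos.mpr hm)]
  have := hbs (N s * t)
  calc (1:ℝ) = (N s)⁻¹ * N s := by field_simp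
    _ ≤ (N s)⁻¹ * N (s + (N s * t) • w) :=
        mul_le_mul_of_nonneg_left this (le_of_lt (inv_pos.mpr hm))

/-- If two unit vectors differ by a nonzero multiple of a good direction `w`,
the reflection associated to `w` exchanges them. -/
theorem GoodNorm.refl_chord {N} (hN : GoodNorm N) {w z : ℝ × ℝ} (hw : GoodDir N w)
    (hz : N z = 1) (hb : Birk N z w) (hd : det2 z w ≠ 0) :
    ∀ a b (c : ℝ), N a = 1 → N b = 1 → b = a + c • w → c ≠ 0 → refl2 z w a = b := by
  intro a b c ha hbu hba hc
  have hbz : bcoord z w (a + b) = 0 := by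
    by_cases hab : a + b = 0
    · rw [hab, bcoord_zero]
    · have hbs : Birk N (a + b) w := hN.sum_birk ha hbu hba hc
      obtain ⟨hu1, hu2⟩ := hN.birk_normalize hab hbs
      rcases hN.birk_unique hw hz hu1 hb hu2 with h | h
      · have h0 : bcoord z w ((N (a+b))⁻¹ • (a+b)) = 0 := by rw [h, bcoord_self]
        rw [bcoord_smul] at h0
        rcases mul_eq_zero.mp h0 with h' | h'
        · exact absurd h' (inv_ne_zero (ne_of_gt (hN.pos hab)))
        · exact h'
      · have h0 : bcoord z w ((N (a+b))⁻¹ • (a+b)) = 0 := by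
          rw [h, show -z = (-1 : ℝ) • z by module, bcoord_smul, bcoord_self]; ring
        rw [bcoord_smul] at h0
        rcases mul_eq_zero.mp h0 with h' | h'
        · exact absurd h' (inv_ne_zero (ne_of_gt (hN.pos hab)))
        · exact h'
  have hsum : 2 * bcoord z w a + c = 0 := by
    rw [bcoord_add] at hbz
    have : bcoord z w b = bcoord z w a + c := by
      rw [hba, bcoord_add, bcoord_smul, bcoord_w hd, mul_one]
    linarith [hbz, this]
  rw [refl2, hba]
  have h2c : 2 * bcoord z w a = -c := by linarith
  rw [h2c]
  module

/-- The reflection associated to a good direction is an isometry of `N`. -/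
theorem GoodNorm.refl_isometry {N} (hN : GoodNorm N) {w z : ℝ × ℝ} (hw : GoodDir N w)
    (hz : N z = 1) (hb : Birk N z w) (hd : det2 z w ≠ 0) :
    ∀ v, N (refl2 z w v) = N v := by
  have unit_case : ∀ v, N v = 1 → N (refl2 z w v) = 1 := by
    intro v hv
    by_cases hbc : bcoord z w v = 0
    · rw [refl2, hbc]
      simp [hv]
    by_cases hpar : det2 v w = 0
    · obtain ⟨cc, hcc⟩ := parallel_of_det2 hpar hw.1
      have hrv : refl2 z w v = -v := by
        rw [refl2, hcc, bcoord_smul, bcoord_w hd, mul_one]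
        module
      rw [hrv, hN.neg]
      exact hv
    · -- main case: find a second crossing point
      have hBfail : ¬ (∀ t : ℝ, 1 ≤ N (v + t • w)) := by
        intro hB'
        have hbv : Birk N v w := by intro t; rw [hv]; exact hB' t
        rcases hN.birk_unique hw hz hv hb hbv with h | h
        · rw [h, bcoord_self] at hbc; exact hbc rfl
        · rw [h, show -z = (-1 : ℝ) • z by module, bcoord_smul, bcoord_self,
            mul_zero] at hbc
          exact hbc rfl
      push_neg at hBfail
      obtain ⟨t₀, ht₀⟩ := hBfail
      have ht₀ne : t₀ ≠ 0 := by
        intro h0; rw [h0] at ht₀; simp [hv] at ht₀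
      obtain ⟨c, hc, hcle⟩ := hN.lower
      have hwn : (0:ℝ) < ‖w‖ := norm_pos_iff.mpr hw.1
      have ht₀abs : (0:ℝ) < |t₀| := abs_pos.mpr ht₀ne
      set lam : ℝ := (1/c + ‖v‖ + 1) / (|t₀| * ‖w‖) + 1 with hlam
      have hlampos : 1 ≤ lam := by
        have : 0 ≤ (1/c + ‖v‖ + 1) / (|t₀| * ‖w‖) := by positivity
        rw [hlam]; linarith
      set T : ℝ := t₀ * lam with hT
      have hTbig : 1 < N (v + T • w) := by
        have h1 : ‖T • w‖ ≤ ‖v + T • w‖ + ‖v‖ := by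
          have := norm_add_le (v + T • w) (-v)
          simpa using this
        have h2 : ‖T • w‖ = |T| * ‖w‖ := by rw [norm_smul, Real.norm_eq_abs]
        have h3 : |T| = |t₀| * lam := by
          rw [hT, abs_mul, abs_of_pos (by linarith : (0:ℝ) < lam)]
        have h4 : 1/c + ‖v‖ + 1 ≤ |T| * ‖w‖ := by
          rw [h3]
          have : (1/c + ‖v‖ + 1) = ((1/c + ‖v‖ + 1) / (|t₀| * ‖w‖)) * (|t₀| * ‖w‖) := by
            field_simp
          rw [this]
          have hpos : (0:ℝ) < |t₀| * ‖w‖ := by positivity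
          calc ((1/c + ‖v‖ + 1) / (|t₀| * ‖w‖)) * (|t₀| * ‖w‖)
              ≤ (lam) * (|t₀| * ‖w‖) := by
                apply mul_le_mul_of_nonneg_right _ (le_of_lt hpos)
                rw [hlam]; linarith
            _ = |t₀| * lam * ‖w‖ := by ring
        have h5 : 1/c + 1 ≤ ‖v + T • w‖ := by
          rw [h2] at h1; linarith
        have h6 := hcle (v + T • w)
        have : 1 + c ≤ c * ‖v + T • w‖ := by
          calc (1:ℝ) + c = c * (1/c + 1) := by field_simp
            _ ≤ c * ‖v + T • w‖ := mul_le_mul_of_nonneg_left h5 (le_of_lt hc)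
        linarith
      -- IVT
      have hcont : Continuous (fun t : ℝ => N (v + t • w)) := by
        apply hN.continuous.comp; continuity
      have hexists : ∃ t' : ℝ, N (v + t' • w) = 1 ∧ t' ≠ 0 := by
        rcases lt_or_gt_of_ne ht₀ne with hneg | hpos
        · -- t₀ < 0, T ≤ t₀
          have hTle : T ≤ t₀ := by
            rw [hT]
            nlinarith
          have hsub := intermediate_value_Icc' hTle hcont.continuousOn
          have h1mem : (1:ℝ) ∈ Set.Icc (N (v + t₀ • w)) (N (v + T • w)) := by
            rw [Set.mem_Icc]; exact ⟨le_of_lt ht₀, le_of_lt hTbig⟩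
          obtain ⟨t', ht'mem, ht'⟩ := hsub h1mem
          exact ⟨t', ht', by
            have := ht'mem.2
            intro h0; rw [h0] at this; linarith⟩
        · -- t₀ > 0, t₀ ≤ T
          have hTge : t₀ ≤ T := by
            rw [hT]; nlinarith
          have hsub := intermediate_value_Icc hTge hcont.continuousOn
          have h1mem : (1:ℝ) ∈ Set.Icc (N (v + t₀ • w)) (N (v + T • w)) := by
            rw [Set.mem_Icc]; exact ⟨le_of_lt ht₀, le_of_lt hTbig⟩
          obtain ⟨t', ht'mem, ht'⟩ := hsub h1mem
          exact ⟨t', ht', by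
            have := ht'mem.1
            intro h0; rw [h0] at this; linarith⟩
      obtain ⟨t', ht'unit, ht'ne⟩ := hexists
      have hbb : v + t' • w = v + t' • w := rfl
      have hreflv := hN.refl_chord hw hz hb hd v (v + t' • w) t' hv ht'unit rfl ht'ne
      rw [hreflv]
      exact ht'unit
  intro v
  by_cases hv0 : v = 0
  · subst hv0; rw [refl2_zero]
  · have hNv : 0 < N v := hN.pos hv0
    have hvdec : v = (N v) • ((N v)⁻¹ • v) := by
      rw [smul_smul, mul_inv_cancel₀ (ne_of_gt hNv), one_smul]
    have hunit : N ((N v)⁻¹ • v) = 1 := by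
      rw [hN.hom, abs_of_pos (inv_pos.mpr hNv)]
      field_simp
    calc N (refl2 z w v) = N (refl2 z w ((N v) • ((N v)⁻¹ • v))) := by rw [← hvdec]
      _ = N ((N v) • refl2 z w ((N v)⁻¹ • v)) := by rw [refl2_smul]
      _ = |N v| * N (refl2 z w ((N v)⁻¹ • v)) := hN.hom _ _
      _ = N v * 1 := by rw [abs_of_pos hNv, unit_case _ hunit]
      _ = N v := by ring

/-! ### Maximal flat segments -/

/-- A maximal unit segment (maximal within its own line). -/
def MaxSeg (N : ℝ × ℝ → ℝ) (p q : ℝ × ℝ) : Prop :=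
  UnitSeg N p q ∧ ∀ t : ℝ, N (p + t • (q - p)) = 1 → 0 ≤ t ∧ t ≤ 1

theorem UnitSeg.endpoints {N : ℝ × ℝ → ℝ} {p q : ℝ × ℝ} (h : UnitSeg N p q) :
    N p = 1 ∧ N q = 1 := by
  constructor
  · have := h.2 0 le_rfl zero_le_one
    simpa using this
  · have := h.2 1 zero_le_one le_rfl
    simpa using this

theorem GoodNorm.seg_indep {N} (hN : GoodNorm N) {p q : ℝ × ℝ} (h : UnitSeg N p q) :
    det2 p q ≠ 0 := by
  obtain ⟨hp1, hq1⟩ := h.endpoints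
  intro hd
  have hq0 : q ≠ 0 := by
    intro h0; rw [h0, hN.zero] at hq1; linarith
  obtain ⟨c, hc⟩ := parallel_of_det2 hd hq0
  have hcabs : |c| = 1 := by
    rw [hc, hN.hom, hq1, mul_one] at hp1; exact hp1
  rcases (abs_eq (by norm_num : (0:ℝ) ≤ 1)).mp hcabs with h1 | h1
  · rw [h1, one_smul] at hc
    exact h.1 hc
  · rw [h1] at hc
    have hmid := h.2 (1/2) (by norm_num) (by norm_num)
    have hvec : p + (1/2 : ℝ) • (q - p) = 0 := by rw [hc]; module
    rw [hvec, hN.zero] at hmid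
    linarith

/-- Convexity along a line: interpolation upper bound. -/
theorem GoodNorm.line_le {N} (hN : GoodNorm N) (p d : ℝ × ℝ) {t₁ t t₂ : ℝ}
    (h1 : t₁ ≤ t) (h2 : t ≤ t₂)
    (hv1 : N (p + t₁ • d) ≤ 1) (hv2 : N (p + t₂ • d) ≤ 1) :
    N (p + t • d) ≤ 1 := by
  rcases eq_or_lt_of_le (le_trans h1 h2) with he | hlt
  · have ht : t = t₁ := le_antisymm (he ▸ h2) h1
    rw [ht]; exact hv1
  · set μ := (t₂ - t) / (t₂ - t₁) with hμ
    have hμ0 : 0 ≤ μ := div_nonneg (by linarith) (by linarith)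
    have hμ1 : μ ≤ 1 := by
      rw [hμ, div_le_one (by linarith : (0:ℝ) < t₂ - t₁)]; linarith
    have hmul : μ * (t₂ - t₁) = t₂ - t := by
      rw [hμ]; exact div_mul_cancel₀ _ (ne_of_gt (by linarith))
    have hsc : μ * t₁ + (1 - μ) * t₂ = t := by linear_combination -hmul
    have hvec : μ • (p + t₁ • d) + (1 - μ) • (p + t₂ • d) = p + t • d := by
      rw [← hsc]; module
    have := hN.comb μ (1 - μ) hμ0 (by linarith) (p + t₁ • d) (p + t₂ • d)
    rw [hvec] at this
    nlinarith

/-- Convexity along a line: outer point lower bound (left). -/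
theorem GoodNorm.line_ge {N} (hN : GoodNorm N) (p d : ℝ × ℝ) {t₁ t₂ t₃ : ℝ}
    (h12 : t₁ < t₂) (h23 : t₂ < t₃)
    (hv2 : N (p + t₂ • d) = 1) (hv3 : N (p + t₃ • d) = 1) :
    1 ≤ N (p + t₁ • d) := by
  set μ := (t₃ - t₂) / (t₃ - t₁) with hμ
  have hpos : (0:ℝ) < t₃ - t₁ := by linarith
  have hμpos : 0 < μ := div_pos (by linarith) hpos
  have hμ1 : μ ≤ 1 := by
    rw [hμ, div_le_one hpos]; linarith
  have hmul : μ * (t₃ - t₁) = t₃ - t₂ := by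
    rw [hμ]; exact div_mul_cancel₀ _ (ne_of_gt hpos)
  have hsc : μ * t₁ + (1 - μ) * t₃ = t₂ := by linear_combination -hmul
  have hvec : μ • (p + t₁ • d) + (1 - μ) • (p + t₃ • d) = p + t₂ • d := by
    rw [← hsc]; module
  have := hN.comb μ (1 - μ) (le_of_lt hμpos) (by linarith) (p + t₁ • d) (p + t₃ • d)
  rw [hvec, hv2, hv3] at this
  nlinarith

/-- Convexity along a line: outer point lower bound (right). -/
theorem GoodNorm.line_ge' {N} (hN : GoodNorm N) (p d : ℝ × ℝ) {t₁ t₂ t₃ : ℝ}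
    (h12 : t₁ < t₂) (h23 : t₂ < t₃)
    (hv1 : N (p + t₁ • d) = 1) (hv2 : N (p + t₂ • d) = 1) :
    1 ≤ N (p + t₃ • d) := by
  have key := hN.line_ge p (-d) (t₁ := -t₃) (t₂ := -t₂) (t₃ := -t₁)
    (by linarith) (by linarith)
    (by rwa [show p + (-t₂) • (-d) = p + t₂ • d by module])
    (by rwa [show p + (-t₁) • (-d) = p + t₁ • d by module])
  rwa [show p + (-t₃) • (-d) = p + t₃ • d by module] at key

/-- Every unit segment extends to a maximal one with the same direction. -/
theorem GoodNorm.seg_extend {N} (hN : GoodNorm N) {p q : ℝ × ℝ}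
    (h : UnitSeg N p q) :
    ∃ p' q', MaxSeg N p' q' ∧ ∃ c : ℝ, c ≠ 0 ∧ q' - p' = c • (q - p) := by
  obtain ⟨hp1, hq1⟩ := h.endpoints
  have hdne : q - p ≠ 0 := by
    rw [sub_ne_zero]; exact fun hh => h.1 hh.symm
  set T := {t : ℝ | N (p + t • (q - p)) = 1} with hT
  have hTm : ∀ t : ℝ, t ∈ T ↔ N (p + t • (q - p)) = 1 := fun t => Iff.rfl
  have hcont : Continuous (fun t : ℝ => N (p + t • (q - p))) := by
    apply hN.continuous.comp; continuity
  have hTclosed : IsClosed T := by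
    have : T = (fun t : ℝ => N (p + t • (q - p))) ⁻¹' {1} := rfl
    rw [this]
    exact IsClosed.preimage hcont isClosed_singleton
  obtain ⟨c₀, hc₀, hcle⟩ := hN.lower
  have hdn : (0:ℝ) < ‖q - p‖ := norm_pos_iff.mpr hdne
  have hTbdd : ∀ t ∈ T, |t| ≤ (1 / c₀ + ‖p‖) / ‖q - p‖ := by
    intro t ht
    have h1 : c₀ * ‖p + t • (q - p)‖ ≤ 1 := by
      rw [hTm] at ht; rw [← ht]; exact hcle _
    have h2 : ‖t • (q - p)‖ ≤ ‖p + t • (q - p)‖ + ‖p‖ := by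
      have := norm_add_le (p + t • (q - p)) (-p); simpa using this
    have h3 : ‖p + t • (q - p)‖ ≤ 1 / c₀ := by
      rw [le_div_iff₀ hc₀]; linarith
    have h4 : |t| * ‖q - p‖ ≤ 1 / c₀ + ‖p‖ := by
      have h5 : ‖t • (q - p)‖ = |t| * ‖q - p‖ := by rw [norm_smul, Real.norm_eq_abs]
      rw [h5] at h2; linarith
    rw [le_div_iff₀ hdn]
    exact h4
  have h0T : (0:ℝ) ∈ T := by rw [hTm]; simpa using hp1
  have h1T : (1:ℝ) ∈ T := by
    rw [hTm, one_smul, show p + (q - p) = q by module]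
    exact hq1
  have hTne : T.Nonempty := ⟨0, h0T⟩
  have hbddA : BddAbove T :=
    ⟨(1/c₀ + ‖p‖)/‖q - p‖, fun t ht => le_trans (le_abs_self t) (hTbdd t ht)⟩
  have hbddB : BddBelow T :=
    ⟨-((1/c₀ + ‖p‖)/‖q - p‖), fun t ht => by
      have h1 := hTbdd t ht
      have h2 := neg_abs_le t
      linarith⟩
  have htpmem : sSup T ∈ T := hTclosed.csSup_mem hTne hbddA
  have htmmem : sInf T ∈ T := hTclosed.csInf_mem hTne hbddB
  have htmle : sInf T ≤ 0 := csInf_le hbddB h0T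
  have htpge : 1 ≤ sSup T := le_csSup hbddA h1T
  have hfill : ∀ t, sInf T ≤ t → t ≤ sSup T → t ∈ T := by
    intro t hl hr
    have hle : N (p + t • (q - p)) ≤ 1 :=
      hN.line_le p (q - p) hl hr (le_of_eq ((hTm _).mp htmmem)) (le_of_eq ((hTm _).mp htpmem))
    have hge : 1 ≤ N (p + t • (q - p)) := by
      rcases lt_trichotomy t 0 with hneg | h0 | hpos
      · exact hN.line_ge p (q - p) hneg zero_lt_one ((hTm 0).mp h0T) ((hTm 1).mp h1T)
      · rw [h0]; rw [(hTm 0).mp h0T]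
      · rcases le_or_gt t 1 with h1' | h1'
        · exact le_of_eq (h.2 t (le_of_lt hpos) h1').symm
        · exact hN.line_ge' p (q - p) zero_lt_one h1' ((hTm 0).mp h0T) ((hTm 1).mp h1T)
    rw [hTm]
    linarith
  have hcpos : (0:ℝ) < sSup T - sInf T := by linarith
  refine ⟨p + sInf T • (q - p), p + sSup T • (q - p), ⟨⟨?_, ?_⟩, ?_⟩,
    sSup T - sInf T, ne_of_gt hcpos, ?_⟩
  · intro hcon
    have h1 : sInf T • (q - p) = sSup T • (q - p) := by
      have h2 := hcon
      rwa [add_right_inj] at h2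
    have heq : (sSup T - sInf T) • (q - p) = 0 := by
      rw [sub_smul, ← h1, sub_self]
    rcases smul_eq_zero.mp heq with h' | h'
    · linarith
    · exact hdne h'
  · intro l hl0 hl1
    have hvec : (p + sInf T • (q - p)) + l • ((p + sSup T • (q - p)) - (p + sInf T • (q - p)))
        = p + (sInf T + l * (sSup T - sInf T)) • (q - p) := by module
    rw [hvec]
    exact (hTm _).mp (hfill _ (by nlinarith) (by nlinarith))
  · intro t hunit
    have hvec : (p + sInf T • (q - p)) + t • ((p + sSup T • (q - p)) - (p + sInf T • (q - p)))
        = p + (sInf T + t * (sSup T - sInf T)) • (q - p) := by module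
    rw [hvec] at hunit
    have hmem : (sInf T + t * (sSup T - sInf T)) ∈ T := (hTm _).mpr hunit
    have hle : sInf T + t * (sSup T - sInf T) ≤ sSup T := le_csSup hbddA hmem
    have hge : sInf T ≤ sInf T + t * (sSup T - sInf T) := csInf_le hbddB hmem
    constructor
    · nlinarith
    · nlinarith
  · module

/-- If a point is in the open interior of two maximal segments, they coincide
(up to orientation). -/
theorem GoodNorm.maxseg_interior_unique {N} (hN : GoodNorm N)
    {p q p' q' : ℝ × ℝ} (h : MaxSeg N p q) (h' : MaxSeg N p' q')
    {l l' : ℝ} (hl0 : 0 < l) (hl1 : l < 1) (hl0' : 0 < l') (hl1' : l' < 1)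
    (hx : p + l • (q - p) = p' + l' • (q' - p')) :
    (p = p' ∧ q = q') ∨ (p = q' ∧ q = p') := by
  have hdne : q - p ≠ 0 := by
    rw [sub_ne_zero]; exact fun hh => h.1.1 hh.symm
  have hdne' : q' - p' ≠ 0 := by
    rw [sub_ne_zero]; exact fun hh => h'.1.1 hh.symm
  have hNp : N p = 1 := h.1.endpoints.1
  have hNq : N q = 1 := h.1.endpoints.2
  have hNp' : N p' = 1 := h'.1.endpoints.1
  have hNq' : N q' = 1 := h'.1.endpoints.2
  by_cases hpar : det2 (q' - p') (q - p) = 0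
  · -- parallel case
    obtain ⟨k, hk⟩ := parallel_of_det2 hpar hdne
    have hk0 : k ≠ 0 := by
      intro h0; rw [h0, zero_smul] at hk; exact hdne' hk
    have hp'eq : p' = p + (l - l' * k) • (q - p) := by
      have h1 : p + l • (q - p) - l' • (q' - p') = p' := by
        rw [hx]; module
      rw [← h1, hk]; module
    have hP' : p' = p + (l - l' * k) • (q - p) := hp'eq
    have hQ' : q' = p + ((l - l' * k) + k) • (q - p) := by
      have h1 : q' = p' + k • (q - p) := by rw [← hk]; module
      rw [h1, hp'eq]; module
    have hscP : (-(l - l' * k)/k) * k = -(l - l' * k) := by field_simp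
    have hP : p = p' + (-(l - l' * k)/k) • (q' - p') := by
      rw [hk, smul_smul, hscP, hp'eq]; module
    have hscQ : ((1 - (l - l' * k))/k) * k = 1 - (l - l' * k) := by field_simp
    have hQ : q = p' + ((1 - (l - l' * k))/k) • (q' - p') := by
      rw [hk, smul_smul, hscQ, hp'eq]; module
    have A0 := h.2 (l - l' * k) (by rw [← hP']; exact hNp')
    have A1 := h.2 ((l - l' * k) + k) (by rw [← hQ']; exact hNq')
    have B0 := h'.2 (-(l - l' * k)/k) (by rw [← hP]; exact hNp)
    have B1 := h'.2 ((1 - (l - l' * k))/k) (by rw [← hQ]; exact hNq)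
    have e1 : -(l - l' * k) = (-(l - l' * k)/k) * k := by field_simp
    have e2 : 1 - (l - l' * k) = ((1 - (l - l' * k))/k) * k := by field_simp
    rcases lt_or_gt_of_ne hk0 with hkneg | hkpos
    · -- k < 0 : swap case
      right
      have hu1 : l - l' * k = 1 := by
        nlinarith [B1.1, B1.2, A0.1, A0.2, mul_nonneg B1.1 (le_of_lt (neg_pos.mpr hkneg))]
      have hkm1 : k = -1 := by
        nlinarith [B0.1, B0.2, A1.1, A1.2, mul_nonneg B0.1 (le_of_lt (neg_pos.mpr hkneg))]
      constructor
      · rw [hQ', hu1, hkm1]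
        module
      · rw [hP', hu1]
        module
    · -- k > 0 : same orientation
      left
      have hu0 : l - l' * k = 0 := by
        nlinarith [B0.1, B0.2, A0.1, A0.2, mul_nonneg B0.1 (le_of_lt hkpos)]
      have hk1 : k = 1 := by
        nlinarith [B1.1, B1.2, A1.1, A1.2, mul_nonneg B1.1 (le_of_lt hkpos)]
      constructor
      · rw [hP', hu0]
        module
      · rw [hQ', hu0, hk1]
        module
  · -- crossing case: impossible
    exfalso
    have hD : det2 (q - p) (q' - p') ≠ 0 := by
      intro h0
      apply hpar
      rw [det2_swap, h0, neg_zero]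
    have hNx : N (p + l • (q - p)) = 1 := h.1.2 l (le_of_lt hl0) (le_of_lt hl1)
    have hxdec := cramer hD (p + l • (q - p))
    set γ₁ := det2 (p + l • (q - p)) (q' - p') / det2 (q - p) (q' - p') with hγ₁
    set γ₂ := det2 (q - p) (p + l • (q - p)) / det2 (q - p) (q' - p') with hγ₂
    have hεpos : 0 < min (min l (1 - l)) (min l' (1 - l')) := by
      apply lt_min
      · exact lt_min hl0 (by linarith)
      · exact lt_min hl0' (by linarith)
    set ε := min (min l (1 - l)) (min l' (1 - l')) with hε
    have hden : (0:ℝ) < 2 * (|γ₁| + |γ₂|) + 1 := by positivity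
    set η := ε / (2 * (|γ₁| + |γ₂|) + 1) with hη
    have hηpos : 0 < η := div_pos hεpos hden
    have habs : ∀ γ : ℝ, |γ| ≤ |γ₁| + |γ₂| → |2 * (η * γ)| ≤ ε := by
      intro γ hγ
      have h1 : |2 * (η * γ)| = 2 * η * |γ| := by
        rw [abs_mul, abs_mul, abs_of_pos hηpos]
        norm_num
        ring
      rw [h1]
      calc 2 * η * |γ| = ε * (2 * |γ|) / (2 * (|γ₁| + |γ₂|) + 1) := by
            rw [hη]; ring
        _ ≤ ε * (2 * (|γ₁| + |γ₂|) + 1) / (2 * (|γ₁| + |γ₂|) + 1) := by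
            gcongr
            linarith
        _ = ε := by field_simp
    have hc₁ := habs γ₁ (by linarith [abs_nonneg γ₂])
    have hc₂ := habs γ₂ (by linarith [abs_nonneg γ₁])
    obtain ⟨hc₁l, hc₁r⟩ := abs_le.mp hc₁
    obtain ⟨hc₂l, hc₂r⟩ := abs_le.mp hc₂
    have hεl : ε ≤ l := le_trans (min_le_left _ _) (min_le_left _ _)
    have hεl2 : ε ≤ 1 - l := le_trans (min_le_left _ _) (min_le_right _ _)
    have hεl' : ε ≤ l' := le_trans (min_le_right _ _) (min_le_left _ _)
    have hεl2' : ε ≤ 1 - l' := le_trans (min_le_right _ _) (min_le_right _ _)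
    have hud : N ((p + l • (q - p)) + (2 * (η * γ₁)) • (q - p)) = 1 := by
      have hv : (p + l • (q - p)) + (2 * (η * γ₁)) • (q - p)
          = p + (l + 2 * (η * γ₁)) • (q - p) := by module
      rw [hv]
      exact h.1.2 _ (by linarith) (by linarith)
    have hud' : N ((p + l • (q - p)) + (2 * (η * γ₂)) • (q' - p')) = 1 := by
      have hv : (p + l • (q - p)) + (2 * (η * γ₂)) • (q' - p')
          = p' + (l' + 2 * (η * γ₂)) • (q' - p') := by rw [hx]; module
      rw [hv]
      exact h'.1.2 _ (by linarith) (by linarith)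
    have hkey : (1 + η) • (p + l • (q - p))
        = (1/2 : ℝ) • ((p + l • (q - p)) + (2 * (η * γ₁)) • (q - p))
          + (1/2 : ℝ) • ((p + l • (q - p)) + (2 * (η * γ₂)) • (q' - p')) := by
      have hxd : γ₁ • (q - p) + γ₂ • (q' - p') = p + l • (q - p) := hxdec.symm
      calc (1 + η) • (p + l • (q - p))
          = (p + l • (q - p)) + η • (γ₁ • (q - p) + γ₂ • (q' - p')) := by
            rw [hxd]; module
        _ = _ := by module
    have hcontr := hN.comb (1/2) (1/2) (by norm_num) (by norm_num)
      ((p + l • (q - p)) + (2 * (η * γ₁)) • (q - p))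
      ((p + l • (q - p)) + (2 * (η * γ₂)) • (q' - p'))
    rw [← hkey, hud, hud'] at hcontr
    have hfin : N ((1 + η) • (p + l • (q - p))) = 1 + η := by
      rw [hN.hom, abs_of_pos (by linarith), hNx, mul_one]
    rw [hfin] at hcontr
    linarith

/-! ### Countability of maximal segments -/

/-- Open cone over the open part of a segment. -/
def segCone (p q : ℝ × ℝ) : Set (ℝ × ℝ) :=
  {v | 0 < det2 v q * det2 p q ∧ 0 < det2 p v * det2 p q}

theorem segCone_open (p q : ℝ × ℝ) : IsOpen (segCone p q) := by
  have h1 : Continuous fun v : ℝ × ℝ => det2 v q * det2 p q := by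
    simp only [det2]; fun_prop
  have h2 : Continuous fun v : ℝ × ℝ => det2 p v * det2 p q := by
    simp only [det2]; fun_prop
  exact (isOpen_lt continuous_const h1).inter (isOpen_lt continuous_const h2)

theorem GoodNorm.segCone_interior {N} (hN : GoodNorm N) {p q v : ℝ × ℝ}
    (h : MaxSeg N p q) (hv : v ∈ segCone p q) :
    ∃ l : ℝ, 0 < l ∧ l < 1 ∧ (N v)⁻¹ • v = p + l • (q - p) := by
  have hD : det2 p q ≠ 0 := hN.seg_indep h.1
  obtain ⟨hv1, hv2⟩ := hv
  have hα : 0 < det2 v q / det2 p q := by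
    rw [show det2 v q / det2 p q = (det2 v q * det2 p q) / (det2 p q) ^ 2 by
      field_simp]
    exact div_pos hv1 (by positivity)
  have hβ : 0 < det2 p v / det2 p q := by
    rw [show det2 p v / det2 p q = (det2 p v * det2 p q) / (det2 p q) ^ 2 by
      field_simp]
    exact div_pos hv2 (by positivity)
  set α := det2 v q / det2 p q with hαd
  set β := det2 p v / det2 p q with hβd
  have hvd := cramer hD v
  have hsum : 0 < α + β := by linarith
  have hl0 : 0 < β / (α + β) := div_pos hβ hsum
  have hl1 : β / (α + β) < 1 := by
    rw [div_lt_one hsum]; linarith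
  have hunit : N (p + (β / (α + β)) • (q - p)) = 1 :=
    h.1.2 _ (le_of_lt hl0) (le_of_lt hl1)
  have hsumne : α + β ≠ 0 := ne_of_gt hsum
  have hvrep : v = (α + β) • (p + (β / (α + β)) • (q - p)) := by
    have hsc : (α + β) * (β / (α + β)) = β := by field_simp
    have hexp : (α + β) • (p + (β / (α + β)) • (q - p))
        = α • p + β • q := by
      rw [smul_add, smul_smul, hsc]
      module
    rw [hexp, hvd]
  have hNv : N v = α + β := by
    rw [hvrep, hN.hom, abs_of_pos hsum, hunit, mul_one]
  refine ⟨β / (α + β), hl0, hl1, ?_⟩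
  rw [hNv, hvrep, smul_smul, inv_mul_cancel₀ (ne_of_gt hsum), one_smul]

theorem GoodNorm.maxseg_rat {N} (hN : GoodNorm N) {p q : ℝ × ℝ} (h : MaxSeg N p q) :
    ∃ r : ℚ × ℚ, ((r.1 : ℝ), (r.2 : ℝ)) ∈ segCone p q := by
  have hD : det2 p q ≠ 0 := hN.seg_indep h.1
  have hm : (p + (1/2 : ℝ) • (q - p)) ∈ segCone p q := by
    constructor
    · rw [show det2 (p + (1/2 : ℝ) • (q - p)) q * det2 p q = (det2 p q)^2 / 2 by
        simp only [det2, Prod.smul_fst, Prod.smul_snd, Prod.fst_add, Prod.snd_add,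
          Prod.fst_sub, Prod.snd_sub, smul_eq_mul]; ring]
      positivity
    · rw [show det2 p (p + (1/2 : ℝ) • (q - p)) * det2 p q = (det2 p q)^2 / 2 by
        simp only [det2, Prod.smul_fst, Prod.smul_snd, Prod.fst_add, Prod.snd_add,
          Prod.fst_sub, Prod.snd_sub, smul_eq_mul]; ring]
      positivity
  obtain ⟨ε, hε, hball⟩ := Metric.isOpen_iff.mp (segCone_open p q) _ hm
  obtain ⟨r₁, hr₁⟩ := exists_rat_near (p + (1/2 : ℝ) • (q - p)).1 hε
  obtain ⟨r₂, hr₂⟩ := exists_rat_near (p + (1/2 : ℝ) • (q - p)).2 hε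
  refine ⟨(r₁, r₂), hball ?_⟩
  rw [Metric.mem_ball, Prod.dist_eq]
  apply max_lt
  · rw [Real.dist_eq, abs_sub_comm]; exact hr₁
  · rw [Real.dist_eq, abs_sub_comm]; exact hr₂

theorem GoodNorm.maxSegSet_countable {N} (hN : GoodNorm N) :
    {pq : (ℝ × ℝ) × (ℝ × ℝ) | MaxSeg N pq.1 pq.2}.Countable := by
  set S := {pq : (ℝ × ℝ) × (ℝ × ℝ) | MaxSeg N pq.1 pq.2} with hS
  have hsub : S ⊆ ⋃ (r : ℚ × ℚ),
      {pq | pq ∈ S ∧ ((r.1 : ℝ), (r.2 : ℝ)) ∈ segCone pq.1 pq.2} := by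
    intro pq hpq
    obtain ⟨r, hr⟩ := hN.maxseg_rat hpq
    exact Set.mem_iUnion.mpr ⟨r, hpq, hr⟩
  apply Set.Countable.mono hsub
  apply Set.countable_iUnion
  intro r
  by_cases hne : {pq | pq ∈ S ∧ ((r.1 : ℝ), (r.2 : ℝ)) ∈ segCone pq.1 pq.2}.Nonempty
  · obtain ⟨A, hA, hAr⟩ := hne
    apply Set.Countable.mono ?_ ((Set.finite_singleton A).insert (A.2, A.1)).countable
    intro B hB
    obtain ⟨hBS, hBr⟩ := hB
    obtain ⟨l, hl0, hl1, hleq⟩ := hN.segCone_interior hA hAr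
    obtain ⟨l', hl0', hl1', hleq'⟩ := hN.segCone_interior hBS hBr
    have hxx : A.1 + l • (A.2 - A.1) = B.1 + l' • (B.2 - B.1) := by
      rw [← hleq, ← hleq']
    rcases hN.maxseg_interior_unique hA hBS hl0 hl1 hl0' hl1' hxx with ⟨h1, h2⟩ | ⟨h1, h2⟩
    · exact Set.mem_insert_iff.mpr (Or.inr (by
        rw [Set.mem_singleton_iff]; exact Prod.ext h1.symm h2.symm))
    · exact Set.mem_insert_iff.mpr (Or.inl (Prod.ext h2.symm h1.symm))
  · rw [Set.not_nonempty_iff_eq_empty] at hne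
    rw [hne]
    exact Set.countable_empty

theorem refl2_sub (z w a b : ℝ × ℝ) :
    refl2 z w (a - b) = refl2 z w a - refl2 z w b := by
  simp only [refl2, bcoord_sub]
  module

/-- A reflection isometry maps maximal segments to maximal segments. -/
theorem GoodNorm.maxseg_refl {N} (hN : GoodNorm N) {w z : ℝ × ℝ} (hw : GoodDir N w)
    (hz : N z = 1) (hb : Birk N z w) (hd : det2 z w ≠ 0) {p q : ℝ × ℝ}
    (h : MaxSeg N p q) : MaxSeg N (refl2 z w p) (refl2 z w q) := by
  have hiso := hN.refl_isometry hw hz hb hd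
  have hlin : ∀ (a b : ℝ × ℝ) (t : ℝ),
      refl2 z w a + t • (refl2 z w b - refl2 z w a) = refl2 z w (a + t • (b - a)) := by
    intro a b t
    rw [← refl2_sub, ← refl2_smul, ← refl2_add]
  refine ⟨⟨?_, ?_⟩, ?_⟩
  · intro hcon
    apply h.1.1
    have h2 := congrArg (refl2 z w) hcon
    rwa [refl2_invol hd, refl2_invol hd] at h2
  · intro l h0 h1
    rw [hlin, hiso]
    exact h.1.2 l h0 h1
  · intro t hunit
    rw [hlin, hiso] at hunit
    exact h.2 t hunit

/-- The main rigidity step: no flat segments on the unit sphere. -/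
theorem GoodNorm.no_flats {N} (hN : GoodNorm N) {p q : ℝ × ℝ} (h : UnitSeg N p q) :
    False := by
  obtain ⟨p₀, q₀, hmax, c, hc, hdir⟩ := hN.seg_extend h
  have hpq : det2 p₀ q₀ ≠ 0 := hN.seg_indep hmax.1
  set W : ℝ → ℝ × ℝ := fun θ => (Real.cos θ, Real.sin θ) with hW
  have hWne : ∀ θ, W θ ≠ 0 := by
    intro θ hcon
    have h1 : Real.cos θ = 0 := congrArg Prod.fst hcon
    have h2 : Real.sin θ = 0 := congrArg Prod.snd hcon
    nlinarith [Real.sin_sq_add_cos_sq θ]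
  have hWdet : ∀ θ₁ θ₂ : ℝ, det2 (W θ₁) (W θ₂) = Real.sin (θ₂ - θ₁) := by
    intro θ₁ θ₂
    rw [Real.sin_sub]
    simp only [det2, hW]
    ring
  have hWind : ∀ θ₁ θ₂ : ℝ, θ₁ ∈ Set.Ioo 0 Real.pi → θ₂ ∈ Set.Ioo 0 Real.pi →
      θ₁ ≠ θ₂ → det2 (W θ₁) (W θ₂) ≠ 0 := by
    intro θ₁ θ₂ h1 h2 hne
    rw [hWdet]
    rcases lt_or_gt_of_ne hne with hlt | hgt
    · exact ne_of_gt (Real.sin_pos_of_pos_of_lt_pi (by linarith)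
        (by linarith [h1.1, h2.2]))
    · have hpos : 0 < Real.sin (θ₁ - θ₂) :=
        Real.sin_pos_of_pos_of_lt_pi (by linarith) (by linarith [h2.1, h1.2])
      have hs : Real.sin (θ₂ - θ₁) = - Real.sin (θ₁ - θ₂) := by
        rw [← Real.sin_neg]; ring_nf
      rw [hs]
      exact neg_ne_zero.mpr (ne_of_gt hpos)
  -- the set of bad directions is countable
  set Bad := {θ | θ ∈ Set.Ioo 0 Real.pi ∧ ¬ GoodDir N (W θ)} with hBad
  have hBadcount : Bad.Countable := by
    have hBadsub : Bad ⊆ ⋃ pq ∈ {pq : (ℝ×ℝ)×(ℝ×ℝ) | MaxSeg N pq.1 pq.2},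
        {θ | θ ∈ Set.Ioo 0 Real.pi ∧ det2 (pq.2 - pq.1) (W θ) = 0} := by
      intro θ hθ
      obtain ⟨hθmem, hθbad⟩ := hθ
      rw [GoodDir] at hθbad
      push_neg at hθbad
      obtain ⟨p₁, q₁, hseg₁, hdet₁⟩ := hθbad (hWne θ)
      obtain ⟨P, Q, hPQ, c₁, hc₁, hdir₁⟩ := hN.seg_extend hseg₁
      apply Set.mem_biUnion (show (P, Q) ∈ {pq : (ℝ×ℝ)×(ℝ×ℝ) | MaxSeg N pq.1 pq.2} from hPQ)
      refine ⟨hθmem, ?_⟩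
      show det2 ((P, Q).2 - (P, Q).1) (W θ) = 0
      have : (P, Q).2 - (P, Q).1 = c₁ • (q₁ - p₁) := hdir₁
      rw [this, det2_smul_left, hdet₁, mul_zero]
    apply Set.Countable.mono hBadsub
    apply Set.Countable.biUnion (hN.maxSegSet_countable)
    intro pq hpq'
    apply Set.Subsingleton.countable
    intro θ₁ h₁ θ₂ h₂
    by_contra hne
    have hdne : pq.2 - pq.1 ≠ 0 := sub_ne_zero.mpr (fun hh => hpq'.1.1 hh.symm)
    obtain ⟨c₁, hc₁⟩ := parallel_of_det2
      (show det2 (W θ₁) (pq.2 - pq.1) = 0 by rw [det2_swap, h₁.2, neg_zero]) hdne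
    obtain ⟨c₂, hc₂⟩ := parallel_of_det2
      (show det2 (W θ₂) (pq.2 - pq.1) = 0 by rw [det2_swap, h₂.2, neg_zero]) hdne
    apply hWind θ₁ θ₂ h₁.1 h₂.1 hne
    rw [hc₁, hc₂, det2_smul_left, det2_smul_right, det2_self]
    ring
  -- good angles inject into pairs of endpoints
  set G := {θ | θ ∈ Set.Ioo 0 Real.pi ∧ GoodDir N (W θ)} with hG
  have hzex : ∀ θ : ℝ, ∃ z : ℝ × ℝ,
      θ ∈ G → (N z = 1 ∧ Birk N z (W θ) ∧ det2 z (W θ) ≠ 0) := by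
    intro θ
    by_cases hθ : θ ∈ G
    · obtain ⟨z, hz1, hz2, hz3⟩ := hN.exists_birk (hWne θ)
      exact ⟨z, fun _ => ⟨hz1, hz2, hz3⟩⟩
    · exact ⟨0, fun hh => absurd hh hθ⟩
  choose Z hZ using hzex
  have hFmem : ∀ θ ∈ G, MaxSeg N (refl2 (Z θ) (W θ) p₀) (refl2 (Z θ) (W θ) q₀) := by
    intro θ hθ
    obtain ⟨hz1, hz2, hz3⟩ := hZ θ hθ
    exact hN.maxseg_refl hθ.2 hz1 hz2 hz3 hmax
  have hGcount : G.Countable := by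
    have hsub : G ⊆ ⋃ e ∈ {pq : (ℝ×ℝ)×(ℝ×ℝ) | MaxSeg N pq.1 pq.2},
        {θ | θ ∈ G ∧ (refl2 (Z θ) (W θ) p₀, refl2 (Z θ) (W θ) q₀) = e} := by
      intro θ hθ
      exact Set.mem_biUnion (hFmem θ hθ) ⟨hθ, rfl⟩
    apply Set.Countable.mono hsub
    apply Set.Countable.biUnion (hN.maxSegSet_countable)
    intro e he
    apply Set.Subsingleton.countable
    intro θ₁ h₁ θ₂ h₂
    by_contra hne
    obtain ⟨hz1₁, hz2₁, hz3₁⟩ := hZ θ₁ h₁.1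
    obtain ⟨hz1₂, hz2₂, hz3₂⟩ := hZ θ₂ h₂.1
    have hFeq : (refl2 (Z θ₁) (W θ₁) p₀, refl2 (Z θ₁) (W θ₁) q₀)
        = (refl2 (Z θ₂) (W θ₂) p₀, refl2 (Z θ₂) (W θ₂) q₀) := by
      rw [h₁.2, h₂.2]
    have hp₀ : refl2 (Z θ₁) (W θ₁) p₀ = refl2 (Z θ₂) (W θ₂) p₀ :=
      congrArg Prod.fst hFeq
    have hq₀ : refl2 (Z θ₁) (W θ₁) q₀ = refl2 (Z θ₂) (W θ₂) q₀ :=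
      congrArg Prod.snd hFeq
    have hSeq : ∀ v, refl2 (Z θ₁) (W θ₁) v = refl2 (Z θ₂) (W θ₂) v := by
      intro v
      have hdec := cramer hpq v
      calc refl2 (Z θ₁) (W θ₁) v
          = refl2 (Z θ₁) (W θ₁) ((det2 v q₀ / det2 p₀ q₀) • p₀
              + (det2 p₀ v / det2 p₀ q₀) • q₀) := by rw [← hdec]
        _ = (det2 v q₀ / det2 p₀ q₀) • refl2 (Z θ₁) (W θ₁) p₀
              + (det2 p₀ v / det2 p₀ q₀) • refl2 (Z θ₁) (W θ₁) q₀ := by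
            rw [refl2_add, refl2_smul, refl2_smul]
        _ = (det2 v q₀ / det2 p₀ q₀) • refl2 (Z θ₂) (W θ₂) p₀
              + (det2 p₀ v / det2 p₀ q₀) • refl2 (Z θ₂) (W θ₂) q₀ := by
            rw [hp₀, hq₀]
        _ = refl2 (Z θ₂) (W θ₂) ((det2 v q₀ / det2 p₀ q₀) • p₀
              + (det2 p₀ v / det2 p₀ q₀) • q₀) := by
            rw [refl2_add, refl2_smul, refl2_smul]
        _ = refl2 (Z θ₂) (W θ₂) v := by rw [← hdec]
    have hWW : det2 (W θ₁) (W θ₂) ≠ 0 := hWind θ₁ θ₂ h₁.1.1 h₂.1.1 hne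
    have hw2 : refl2 (Z θ₁) (W θ₁) (W θ₂) = -(W θ₂) := by
      rw [hSeq]; exact refl2_w hz3₂
    have hw1 : refl2 (Z θ₁) (W θ₁) (W θ₁) = -(W θ₁) := refl2_w hz3₁
    have hzdec := cramer hWW (Z θ₁)
    have hneg : refl2 (Z θ₁) (W θ₁) (Z θ₁) = -(Z θ₁) := by
      calc refl2 (Z θ₁) (W θ₁) (Z θ₁)
          = refl2 (Z θ₁) (W θ₁) ((det2 (Z θ₁) (W θ₂) / det2 (W θ₁) (W θ₂)) • W θ₁
              + (det2 (W θ₁) (Z θ₁) / det2 (W θ₁) (W θ₂)) • W θ₂) := by rw [← hzdec]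
        _ = (det2 (Z θ₁) (W θ₂) / det2 (W θ₁) (W θ₂)) • refl2 (Z θ₁) (W θ₁) (W θ₁)
              + (det2 (W θ₁) (Z θ₁) / det2 (W θ₁) (W θ₂)) • refl2 (Z θ₁) (W θ₁) (W θ₂) := by
            rw [refl2_add, refl2_smul, refl2_smul]
        _ = -((det2 (Z θ₁) (W θ₂) / det2 (W θ₁) (W θ₂)) • W θ₁
              + (det2 (W θ₁) (Z θ₁) / det2 (W θ₁) (W θ₂)) • W θ₂) := by
            rw [hw1, hw2]; module
        _ = -(Z θ₁) := by rw [← hzdec]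
    have hfix : refl2 (Z θ₁) (W θ₁) (Z θ₁) = Z θ₁ := refl2_z _ _
    have hzero : Z θ₁ = 0 := by
      have h2 : Z θ₁ = -(Z θ₁) := hfix.symm.trans hneg
      have h3 : (2:ℝ) • Z θ₁ = 0 := by
        rw [two_smul]
        nth_rewrite 2 [h2]
        simp
      rcases smul_eq_zero.mp h3 with h' | h'
      · norm_num at h'
      · exact h'
    rw [hzero, hN.zero] at hz1₁
    norm_num at hz1₁
  -- contradiction with uncountability of the interval
  have hIoo : (Set.Ioo (0:ℝ) Real.pi).Countable := by
    apply Set.Countable.mono ?_ (hGcount.union hBadcount)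
    intro θ hθ
    by_cases hgd : GoodDir N (W θ)
    · exact Or.inl ⟨hθ, hgd⟩
    · exact Or.inr ⟨hθ, hgd⟩
  have hvol := hIoo.measure_zero MeasureTheory.volume
  rw [Real.volume_Ioo] at hvol
  have hne0 : ENNReal.ofReal (Real.pi - 0) ≠ 0 := by
    rw [ne_eq, ENNReal.ofReal_eq_zero, not_le]
    linarith [Real.pi_pos]
  exact hne0 hvol

/-! ### The Loewner ellipse argument -/

/-- Quadratic form with coefficient triple `M`. -/
def Qf (M : ℝ × ℝ × ℝ) (v : ℝ × ℝ) : ℝ :=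
  M.1 * v.1 ^ 2 + 2 * M.2.1 * v.1 * v.2 + M.2.2 * v.2 ^ 2

/-- Determinant of the coefficient triple. -/
def detM (M : ℝ × ℝ × ℝ) : ℝ := M.1 * M.2.2 - M.2.1 ^ 2

/-- The feasible set for the Loewner problem. -/
def Feas (N : ℝ × ℝ → ℝ) : Set (ℝ × ℝ × ℝ) :=
  {M | (∀ v, N v ≤ 1 → Qf M v ≤ 1) ∧ ∀ v, 0 ≤ Qf M v}

theorem Qf_smul (M : ℝ × ℝ × ℝ) (c : ℝ) (v : ℝ × ℝ) :
    Qf M (c • v) = c ^ 2 * Qf M v := by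
  simp only [Qf, Prod.smul_fst, Prod.smul_snd, smul_eq_mul]
  ring

theorem Qf_neg (M : ℝ × ℝ × ℝ) (v : ℝ × ℝ) : Qf M (-v) = Qf M v := by
  simp only [Qf, Prod.fst_neg, Prod.snd_neg]
  ring

theorem Qf_par (M : ℝ × ℝ × ℝ) (a b : ℝ × ℝ) :
    Qf M (a + b) + Qf M (a - b) = 2 * Qf M a + 2 * Qf M b := by
  simp only [Qf, Prod.fst_add, Prod.snd_add, Prod.fst_sub, Prod.snd_sub]
  ring

theorem Qf_expand (M : ℝ × ℝ × ℝ) (a b : ℝ × ℝ) (st tt : ℝ) :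
    Qf M (st • a + tt • b) = st ^ 2 * Qf M a
      + st * tt * (Qf M (a + b) - Qf M a - Qf M b) + tt ^ 2 * Qf M b := by
  simp only [Qf, Prod.smul_fst, Prod.smul_snd, Prod.fst_add, Prod.snd_add,
    smul_eq_mul]
  ring

theorem detM_pull (M : ℝ × ℝ × ℝ) (a b : ℝ × ℝ) :
    Qf M a * Qf M b - ((Qf M (a + b) - Qf M a - Qf M b) / 2) ^ 2
      = detM M * (det2 a b) ^ 2 := by
  simp only [Qf, detM, det2, Prod.fst_add, Prod.snd_add]
  ring

/-- Reflections reverse the plane determinant. -/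
theorem refl2_det2 {z w : ℝ × ℝ} (hd : det2 z w ≠ 0) (u v : ℝ × ℝ) :
    det2 (refl2 z w u) (refl2 z w v) = - det2 u v := by
  have hΔ : z.1 * w.2 - z.2 * w.1 ≠ 0 := hd
  simp only [refl2, bcoord, det2, Prod.fst_sub, Prod.snd_sub, Prod.smul_fst,
    Prod.smul_snd, smul_eq_mul]
  field_simp
  ring

/-- Linear expansion of a reflection in coordinates. -/
theorem refl2_linco (z w v : ℝ × ℝ) :
    refl2 z w v = v.1 • refl2 z w ((1:ℝ), (0:ℝ)) + v.2 • refl2 z w ((0:ℝ), (1:ℝ)) := by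
  conv_lhs => rw [coords_decomp v]
  rw [refl2_add, refl2_smul, refl2_smul]

/-- Uniqueness of the maximal-determinant feasible form. -/
theorem lowner_unique {N : ℝ × ℝ → ℝ} {M₁ M₂ : ℝ × ℝ × ℝ} {m : ℝ}
    (h₁ : M₁ ∈ Feas N) (h₂ : M₂ ∈ Feas N)
    (hd₁ : detM M₁ = m) (hd₂ : detM M₂ = m) (hm : 0 < m)
    (hmax : ∀ M ∈ Feas N, detM M ≤ m) : M₁ = M₂ := by
  obtain ⟨p₁, q₁, r₁⟩ := M₁
  obtain ⟨p₂, q₂, r₂⟩ := M₂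
  simp only [detM] at hd₁ hd₂
  have hp₁0 : 0 ≤ p₁ := by
    have := h₁.2 ((1:ℝ), (0:ℝ))
    simpa [Qf] using this
  have hp₂0 : 0 ≤ p₂ := by
    have := h₂.2 ((1:ℝ), (0:ℝ))
    simpa [Qf] using this
  have hp₁ : 0 < p₁ := by
    rcases eq_or_lt_of_le hp₁0 with h | h
    · exfalso; rw [← h] at hd₁; nlinarith [sq_nonneg q₁]
    · exact h
  have hp₂ : 0 < p₂ := by
    rcases eq_or_lt_of_le hp₂0 with h | h
    · exfalso; rw [← h] at hd₂; nlinarith [sq_nonneg q₂]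
    · exact h
  -- the average is feasible
  set Mb : ℝ × ℝ × ℝ := ((p₁ + p₂)/2, (q₁ + q₂)/2, (r₁ + r₂)/2) with hMb
  have hMbQ : ∀ v, Qf Mb v = (Qf (p₁, q₁, r₁) v + Qf (p₂, q₂, r₂) v) / 2 := by
    intro v; simp only [Qf, hMb]; ring
  have hMbFeas : Mb ∈ Feas N := by
    constructor
    · intro v hv
      rw [hMbQ]
      have := h₁.1 v hv
      have := h₂.1 v hv
      linarith
    · intro v
      rw [hMbQ]
      have := h₁.2 v
      have := h₂.2 v
      linarith
  have hMbdet := hmax Mb hMbFeas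
  have hdetMb : detM Mb = m / 2 + (p₁ * r₂ + p₂ * r₁ - 2 * q₁ * q₂) / 4 := by
    rw [hMb]
    show (p₁ + p₂)/2 * ((r₁ + r₂)/2) - ((q₁ + q₂)/2)^2 = _
    linear_combination (1/4 : ℝ) * hd₁ + (1/4 : ℝ) * hd₂
  have hDD : p₁ * r₂ + p₂ * r₁ - 2 * q₁ * q₂ ≤ 2 * m := by
    rw [hdetMb] at hMbdet; linarith
  have hkey : m * (p₁ - p₂) ^ 2 + (p₁ * q₂ - p₂ * q₁) ^ 2
      = p₁ * p₂ * ((p₁ * r₂ + p₂ * r₁ - 2 * q₁ * q₂) - 2 * m) := by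
    linear_combination (-(p₁ ^ 2)) * hd₂ + (-(p₂ ^ 2)) * hd₁
  have hzero : m * (p₁ - p₂) ^ 2 + (p₁ * q₂ - p₂ * q₁) ^ 2 ≤ 0 := by
    rw [hkey]
    have hX : (p₁ * r₂ + p₂ * r₁ - 2 * q₁ * q₂) - 2 * m ≤ 0 := by linarith
    have h4 : p₁ * p₂ * ((p₁ * r₂ + p₂ * r₁ - 2 * q₁ * q₂) - 2 * m) ≤ p₁ * p₂ * 0 :=
      mul_le_mul_of_nonneg_left hX (mul_nonneg hp₁0 hp₂0)
    rw [mul_zero] at h4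
    exact h4
  have hppsq : (p₁ - p₂) ^ 2 ≤ 0 := by
    nlinarith [sq_nonneg (p₁ * q₂ - p₂ * q₁)]
  have hpp : p₁ = p₂ := by
    have h0 : (p₁ - p₂) ^ 2 = 0 := le_antisymm hppsq (sq_nonneg _)
    have := (pow_eq_zero_iff (by norm_num : (2:ℕ) ≠ 0)).mp h0
    linarith
  have hqeq : q₁ = q₂ := by
    have h1 : (p₁ * q₂ - p₂ * q₁) ^ 2 ≤ 0 := by nlinarith [sq_nonneg (p₁ - p₂), mul_nonneg hm.le (sq_nonneg (p₁ - p₂))]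
    have h2 : p₁ * q₂ - p₂ * q₁ = 0 :=
      (pow_eq_zero_iff (by norm_num : (2:ℕ) ≠ 0)).mp (le_antisymm h1 (sq_nonneg _))
    rw [hpp] at h2
    have := mul_left_cancel₀ (ne_of_gt hp₂) (show p₂ * q₂ = p₂ * q₁ by linarith)
    linarith
  have hreq : r₁ = r₂ := by
    rw [hpp, hqeq] at hd₁
    have := hd₁.trans hd₂.symm
    exact mul_left_cancel₀ (ne_of_gt hp₂) (by linarith)
  rw [hpp, hqeq, hreq]

/-- The 2D core theorem: a norm on the plane satisfying the chord-midpoint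
minimality property (B) satisfies the parallelogram law. -/
theorem core {N : ℝ × ℝ → ℝ} (hN : GoodNorm N) :
    ∀ a b : ℝ × ℝ, N (a + b) ^ 2 + N (a - b) ^ 2 = 2 * N a ^ 2 + 2 * N b ^ 2 := by
  -- every direction is good
  have hall : ∀ w : ℝ × ℝ, w ≠ 0 → GoodDir N w := by
    intro w hw
    exact ⟨hw, fun p q hseg => absurd hseg (fun hh => hN.no_flats hh)⟩
  obtain ⟨c₀, hc₀, hcle⟩ := hN.lower
  -- feasible set is compact
  have hQcont : ∀ v : ℝ × ℝ, Continuous fun M : ℝ × ℝ × ℝ => Qf M v := by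
    intro v; simp only [Qf]; fun_prop
  have hclosed : IsClosed (Feas N) := by
    have he : Feas N = (⋂ v ∈ {v : ℝ × ℝ | N v ≤ 1}, {M : ℝ × ℝ × ℝ | Qf M v ≤ 1})
        ∩ (⋂ v : ℝ × ℝ, {M : ℝ × ℝ × ℝ | 0 ≤ Qf M v}) := by
      ext M
      simp only [Feas, Set.mem_setOf_eq, Set.mem_inter_iff, Set.mem_iInter]
    rw [he]
    apply IsClosed.inter
    · exact isClosed_biInter fun v hv => isClosed_le (hQcont v) continuous_const
    · exact isClosed_iInter fun v => isClosed_le continuous_const (hQcont v)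
  -- bounds on feasible triples
  have hx0 : ((1:ℝ), (0:ℝ)) ≠ (0 : ℝ × ℝ) := by
    intro hcon; exact one_ne_zero (congrArg Prod.fst hcon)
  have hy0 : ((0:ℝ), (1:ℝ)) ≠ (0 : ℝ × ℝ) := by
    intro hcon; exact one_ne_zero (congrArg Prod.snd hcon)
  have hxy0 : ((1:ℝ), (1:ℝ)) ≠ (0 : ℝ × ℝ) := by
    intro hcon; exact one_ne_zero (congrArg Prod.fst hcon)
  have hunit : ∀ v : ℝ × ℝ, v ≠ 0 → N ((N v)⁻¹ • v) = 1 := by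
    intro v hv
    rw [hN.hom, abs_of_pos (inv_pos.mpr (hN.pos hv))]
    exact inv_mul_cancel₀ (ne_of_gt (hN.pos hv))
  have hscaled : ∀ (M : ℝ × ℝ × ℝ), M ∈ Feas N → ∀ v : ℝ × ℝ, v ≠ 0 →
      Qf M v ≤ N v ^ 2 := by
    intro M hM v hv
    have h1 := hM.1 ((N v)⁻¹ • v) (le_of_eq (hunit v hv))
    rw [Qf_smul] at h1
    have hNv : 0 < N v := hN.pos hv
    have h2 : ((N v)⁻¹) ^ 2 * Qf M v ≤ 1 := h1
    calc Qf M v = N v ^ 2 * (((N v)⁻¹) ^ 2 * Qf M v) := by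
          field_simp
      _ ≤ N v ^ 2 * 1 := by
          apply mul_le_mul_of_nonneg_left h2 (by positivity)
      _ = N v ^ 2 := by ring
  set CB : ℝ := N (1, 0) ^ 2 + N (0, 1) ^ 2 + N (1, 1) ^ 2 + 1 with hCB
  have hCBpos : 0 < CB := by
    have := sq_nonneg (N ((1:ℝ), (0:ℝ)))
    have := sq_nonneg (N ((0:ℝ), (1:ℝ)))
    have := sq_nonneg (N ((1:ℝ), (1:ℝ)))
    rw [hCB]; linarith
  have hbox : Feas N ⊆ (Set.Icc (-CB) CB) ×ˢ ((Set.Icc (-CB) CB) ×ˢ (Set.Icc (-CB) CB)) := by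
    rintro ⟨p, qq, r⟩ hM
    have hp0 : 0 ≤ p := by have := hM.2 ((1:ℝ), (0:ℝ)); simpa [Qf] using this
    have hr0 : 0 ≤ r := by have := hM.2 ((0:ℝ), (1:ℝ)); simpa [Qf] using this
    have hpB : p ≤ N (1, 0) ^ 2 := by
      have := hscaled _ hM ((1:ℝ), (0:ℝ)) hx0
      simpa [Qf] using this
    have hrB : r ≤ N (0, 1) ^ 2 := by
      have := hscaled _ hM ((0:ℝ), (1:ℝ)) hy0
      simpa [Qf] using this
    have hqB : p + 2 * qq + r ≤ N (1, 1) ^ 2 := by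
      have := hscaled _ hM ((1:ℝ), (1:ℝ)) hxy0
      simpa [Qf] using this
    have hqlow : 0 ≤ p - 2 * qq + r := by
      have := hM.2 ((1:ℝ), (-1:ℝ))
      simp only [Qf] at this
      nlinarith [this]
    have hqlow2 : 0 ≤ p + 2 * qq + r := by
      have := hM.2 ((1:ℝ), (1:ℝ))
      simp only [Qf] at this
      nlinarith [this]
    refine ⟨⟨?_, ?_⟩, ⟨?_, ?_⟩, ⟨?_, ?_⟩⟩ <;> rw [hCB] <;> dsimp only <;>
      nlinarith [sq_nonneg (N ((1:ℝ),(0:ℝ))), sq_nonneg (N ((0:ℝ),(1:ℝ))),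
        sq_nonneg (N ((1:ℝ),(1:ℝ))), hp0, hr0, hpB, hrB, hqB, hqlow, hqlow2]
  have hcompact : IsCompact (Feas N) := by
    apply IsCompact.of_isClosed_subset ?_ hclosed hbox
    exact isCompact_Icc.prod (isCompact_Icc.prod isCompact_Icc)
  -- a feasible form with positive determinant
  set ε : ℝ := c₀ ^ 2 / 2 with hε
  have hεpos : 0 < ε := by rw [hε]; positivity
  have hM₀ : ((ε, 0, ε) : ℝ × ℝ × ℝ) ∈ Feas N := by
    constructor
    · intro v hv
      have h1 : c₀ * ‖v‖ ≤ 1 := le_trans (hcle v) hv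
      have h2 : ‖v‖ ≤ 1 / c₀ := by rw [le_div_iff₀ hc₀]; linarith
      have h3 : |v.1| ≤ 1 / c₀ := by
        have := norm_fst_le v
        have h4 : |v.1| ≤ ‖v‖ := by simpa using this
        linarith
      have h4 : |v.2| ≤ 1 / c₀ := by
        have := norm_snd_le v
        have h5 : |v.2| ≤ ‖v‖ := by simpa using this
        linarith
      have h5 : v.1 ^ 2 ≤ 1 / c₀ ^ 2 := by
        rw [show (1:ℝ)/c₀^2 = (1/c₀)^2 by ring, ← sq_abs]
        exact pow_le_pow_left₀ (abs_nonneg _) h3 2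
      have h6 : v.2 ^ 2 ≤ 1 / c₀ ^ 2 := by
        rw [show (1:ℝ)/c₀^2 = (1/c₀)^2 by ring, ← sq_abs]
        exact pow_le_pow_left₀ (abs_nonneg _) h4 2
      simp only [Qf]
      have hc2 : 0 < c₀ ^ 2 := by positivity
      calc ε * v.1 ^ 2 + 2 * 0 * v.1 * v.2 + ε * v.2 ^ 2
          = ε * (v.1 ^ 2 + v.2 ^ 2) := by ring
        _ ≤ ε * (2 / c₀ ^ 2) := by
            apply mul_le_mul_of_nonneg_left _ (le_of_lt hεpos)
            have he : 2 / c₀ ^ 2 = 1 / c₀ ^ 2 + 1 / c₀ ^ 2 := by ring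
            rw [he]
            linarith
        _ = 1 := by rw [hε]; field_simp
    · intro v
      simp only [Qf]
      nlinarith [sq_nonneg v.1, sq_nonneg v.2, hεpos]
  -- the maximizer
  have hdetcont : Continuous (detM) := by
    have he : detM = fun M : ℝ × ℝ × ℝ => M.1 * M.2.2 - M.2.1 ^ 2 := rfl
    rw [he]; fun_prop
  obtain ⟨Ms, hMsFeas, hMsmax⟩ :=
    hcompact.exists_isMaxOn ⟨(ε, 0, ε), hM₀⟩ hdetcont.continuousOn
  set m : ℝ := detM Ms with hm
  have hmax : ∀ M ∈ Feas N, detM M ≤ m := fun M hM => hMsmax hM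
  have hmpos : 0 < m := by
    have h1 : detM (ε, 0, ε) ≤ m := hmax _ hM₀
    have h2 : detM ((ε, 0, ε) : ℝ × ℝ × ℝ) = ε ^ 2 := by simp [detM]; ring
    nlinarith
  -- invariance: Q is constant on the unit sphere
  have hQconst : ∀ u v : ℝ × ℝ, N u = 1 → N v = 1 → Qf Ms u = Qf Ms v := by
    intro u v hu hv
    by_cases huv : v = u
    · rw [huv]
    · set w : ℝ × ℝ := v - u with hw
      have hwne : w ≠ 0 := by
        rw [hw, sub_ne_zero]; exact huv
      have hgd : GoodDir N w := hall w hwne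
      obtain ⟨z, hz1, hz2, hz3⟩ := hN.exists_birk hwne
      have hiso := hN.refl_isometry hgd hz1 hz2 hz3
      have hchord := hN.refl_chord hgd hz1 hz2 hz3 u v 1 hu hv
        (by rw [hw]; module) one_ne_zero
      -- the pulled-back form
      set a1 : ℝ × ℝ := refl2 z w ((1:ℝ), (0:ℝ)) with ha1
      set b1 : ℝ × ℝ := refl2 z w ((0:ℝ), (1:ℝ)) with hb1
      set MS : ℝ × ℝ × ℝ := (Qf Ms a1,
        (Qf Ms (a1 + b1) - Qf Ms a1 - Qf Ms b1) / 2, Qf Ms b1) with hMS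
      have hpull : ∀ x : ℝ × ℝ, Qf MS x = Qf Ms (refl2 z w x) := by
        intro x
        rw [refl2_linco z w x, ← ha1, ← hb1, Qf_expand]
        simp only [Qf, hMS]
        ring
      have hMSFeas : MS ∈ Feas N := by
        constructor
        · intro x hx
          rw [hpull]
          apply hMsFeas.1
          rw [hiso]; exact hx
        · intro x
          rw [hpull]
          exact hMsFeas.2 _
      have hMSdet : detM MS = m := by
        have h1 : detM MS = Qf Ms a1 * Qf Ms b1
            - ((Qf Ms (a1 + b1) - Qf Ms a1 - Qf Ms b1) / 2) ^ 2 := by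
          simp [detM, hMS]
        rw [h1, detM_pull, ha1, hb1, refl2_det2 hz3]
        have hd12 : det2 ((1:ℝ), (0:ℝ)) ((0:ℝ), (1:ℝ)) = 1 := by simp [det2]
        rw [hd12]
        norm_num
        rfl
      have heq : Ms = MS := lowner_unique hMsFeas hMSFeas rfl hMSdet hmpos hmax
      calc Qf Ms u = Qf MS u := by rw [← heq]
        _ = Qf Ms (refl2 z w u) := hpull u
        _ = Qf Ms v := by rw [hchord]
  -- Q is proportional to N²
  have hx0 : ((1:ℝ), (0:ℝ)) ≠ (0 : ℝ × ℝ) := by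
    intro hcon; exact one_ne_zero (congrArg Prod.fst hcon)
  set u₀ : ℝ × ℝ := (N (1, 0))⁻¹ • ((1:ℝ), (0:ℝ)) with hu₀
  have hu₀unit : N u₀ = 1 := hunit _ hx0
  set κ : ℝ := Qf Ms u₀ with hκ
  have hκpos : 0 < κ := by
    have hp0 : 0 ≤ Ms.1 := by
      have := hMsFeas.2 ((1:ℝ), (0:ℝ)); simpa [Qf] using this
    have hppos : 0 < Ms.1 := by
      rcases eq_or_lt_of_le hp0 with h | h
      · exfalso
        have : detM Ms = Ms.1 * Ms.2.2 - Ms.2.1 ^ 2 := rfl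
        rw [← h] at this
        nlinarith [sq_nonneg Ms.2.1]
      · exact h
    have hu₀ne : u₀ ≠ 0 := by
      intro hcon; rw [hcon, hN.zero] at hu₀unit; norm_num at hu₀unit
    have hkey : Ms.1 * Qf Ms u₀ = (Ms.1 * u₀.1 + Ms.2.1 * u₀.2) ^ 2 + m * u₀.2 ^ 2 := by
      have hdm : m = Ms.1 * Ms.2.2 - Ms.2.1 ^ 2 := rfl
      simp only [Qf]
      rw [hdm]
      ring
    rcases lt_or_eq_of_le (hMsFeas.2 u₀) with h | h
    · exact h
    · exfalso
      rw [← hκ] at h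
      have h2 : (Ms.1 * u₀.1 + Ms.2.1 * u₀.2) ^ 2 + m * u₀.2 ^ 2 = 0 := by
        rw [← hkey, ← hκ, ← h]
        ring
      have hB2 : u₀.2 ^ 2 ≤ 0 := by
        nlinarith [sq_nonneg (Ms.1 * u₀.1 + Ms.2.1 * u₀.2)]
      have h3 : u₀.2 = 0 :=
        (pow_eq_zero_iff (by norm_num : (2:ℕ) ≠ 0)).mp (le_antisymm hB2 (sq_nonneg _))
      have hA2 : (Ms.1 * u₀.1 + Ms.2.1 * u₀.2) ^ 2 ≤ 0 := by
        nlinarith [mul_nonneg hmpos.le (sq_nonneg u₀.2)]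
      have h4' : Ms.1 * u₀.1 + Ms.2.1 * u₀.2 = 0 :=
        (pow_eq_zero_iff (by norm_num : (2:ℕ) ≠ 0)).mp (le_antisymm hA2 (sq_nonneg _))
      have h4 : Ms.1 * u₀.1 = 0 := by rw [h3] at h4'; simpa using h4'
      have h5 : u₀.1 = 0 := by
        rcases mul_eq_zero.mp h4 with h' | h'
        · exact absurd h' (ne_of_gt hppos)
        · exact h'
      exact hu₀ne (Prod.ext h5 h3)
  have hQN : ∀ v : ℝ × ℝ, Qf Ms v = κ * N v ^ 2 := by
    intro v
    by_cases hv : v = 0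
    · rw [hv, hN.zero]
      simp [Qf]
    · have hNv : 0 < N v := hN.pos hv
      have h1 : Qf Ms ((N v)⁻¹ • v) = κ := hQconst _ _ (hunit v hv) hu₀unit
      rw [Qf_smul] at h1
      calc Qf Ms v = N v ^ 2 * (((N v)⁻¹) ^ 2 * Qf Ms v) := by field_simp
        _ = N v ^ 2 * κ := by rw [h1]
        _ = κ * N v ^ 2 := by ring
  intro a b
  have h1 := hQN (a + b)
  have h2 := hQN (a - b)
  have h3 := hQN a
  have h4 := hQN b
  have hsum := Qf_par Ms a b
  have hfin : κ * (N (a + b) ^ 2 + N (a - b) ^ 2) = κ * (2 * N a ^ 2 + 2 * N b ^ 2) := by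
    nlinarith [h1, h2, h3, h4, hsum]
  exact mul_left_cancel₀ (ne_of_gt hκpos) hfin

end

end AlRashed

section Outer

variable {X : Type*} [NormedAddCommGroup X] [NormedSpace ℝ X]

/-- The convexity rescue lemma: a convex function `f` with `f t ≥ (1 - t²)·f 0`
near `0` has a global minimum at `0`. -/
theorem convex_rescue (f : ℝ → ℝ)
    (hconv : ∀ s t : ℝ, ∀ μ : ℝ, 0 ≤ μ → μ ≤ 1 →
      f (μ * s + (1 - μ) * t) ≤ μ * f s + (1 - μ) * f t)
    (hnn : 0 ≤ f 0)
    (hlow : ∀ t : ℝ, |t| < 1 → (1 - t ^ 2) * f 0 ≤ f t) :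
    ∀ t : ℝ, f 0 ≤ f t := by
  intro T
  by_contra hcon
  push_neg at hcon
  set δ := f 0 - f T with hδ
  have hδpos : 0 < δ := by simp only [hδ]; linarith
  obtain ⟨n, hn⟩ := exists_nat_gt (max (max (|T|) (T ^ 2 * f 0 / δ)) 1)
  have hn1 : (1:ℝ) < n := lt_of_le_of_lt (le_max_right _ _) hn
  have hnpos : (0:ℝ) < n := lt_trans zero_lt_one hn1
  have hTlt : |T| < n := lt_of_le_of_lt (le_max_of_le_left (le_max_left _ _)) hn
  have hdlt : T ^ 2 * f 0 / δ < n := lt_of_le_of_lt (le_max_of_le_left (le_max_right _ _)) hn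
  have hTn : |T / n| < 1 := by
    rw [abs_div, abs_of_pos hnpos, div_lt_one hnpos]; exact hTlt
  have hc := hconv T 0 (1 / n) (by positivity) (by rw [div_le_one hnpos]; linarith)
  have harg : (1 / (n:ℝ)) * T + (1 - 1 / n) * 0 = T / n := by ring
  rw [harg] at hc
  have hlo := hlow (T / n) hTn
  have hfT : f T = f 0 - δ := by rw [hδ]; ring
  rw [hfT] at hc
  have key : δ / n ≤ T ^ 2 * f 0 / n / n := by
    have e1 : (1:ℝ) / n * (f 0 - δ) + (1 - 1 / n) * f 0 = f 0 - δ / n := by ring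
    have e2 : (1 - (T / n) ^ 2) * f 0 = f 0 - T ^ 2 * f 0 / n / n := by
      field_simp
    rw [e1] at hc
    rw [e2] at hlo
    linarith
  have key2 : δ ≤ T ^ 2 * f 0 / n :=
    le_of_mul_le_mul_right (by
      calc δ * n = δ / n * n * n := by field_simp
        _ ≤ T ^ 2 * f 0 / n / n * n * n := by
            have hn0 : (0:ℝ) ≤ n := le_of_lt hnpos
            exact mul_le_mul_of_nonneg_right (mul_le_mul_of_nonneg_right key hn0) hn0
        _ = T ^ 2 * f 0 / n * n := by field_simp) hnpos
  have : T ^ 2 * f 0 / n < δ := by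
    rw [div_lt_iff₀ hnpos]
    calc T ^ 2 * f 0 = T ^ 2 * f 0 / δ * δ := by field_simp
      _ < n * δ := mul_lt_mul_of_pos_right hdlt hδpos
      _ = δ * n := by ring
  linarith

/-- Derivation of property (B) in `X` from the main hypothesis. -/
theorem propB (q : ℝ) (hq : q ∈ Set.Ioc (0:ℝ) 1)
    (h : ∀ x y : X, x ≠ 0 → y ≠ 0 →
      ‖‖x‖⁻¹ • x - ‖y‖⁻¹ • y‖ ≤ 2 ^ (1 / q) * ‖x - y‖ / (‖x‖ ^ q + ‖y‖ ^ q) ^ (1 / q)) :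
    ∀ a b : X, ‖a‖ = ‖b‖ → ∀ t : ℝ, ‖a + b‖ ≤ ‖a + b + t • (a - b)‖ := by
  obtain ⟨hq0, hq1⟩ := hq
  have hqne : q ≠ 0 := ne_of_gt hq0
  intro a b hab t
  rcases eq_or_lt_of_le (norm_nonneg a) with hρ0 | hρpos
  · -- a = 0 and b = 0
    have ha0 : a = 0 := norm_eq_zero.mp hρ0.symm
    have hb0 : b = 0 := norm_eq_zero.mp (by rw [← hab]; exact hρ0.symm)
    subst ha0; subst hb0; simp
  set f : ℝ → ℝ := fun s => ‖a + b + s • (a - b)‖ with hf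
  have hf0 : f 0 = ‖a + b‖ := by simp [hf]
  rw [← hf0]
  have ha0 : a ≠ 0 := by intro h0; rw [h0] at hρpos; simp at hρpos
  have hb0 : b ≠ 0 := by
    intro h0; rw [h0, norm_zero] at hab
    rw [hab] at hρpos; exact lt_irrefl _ hρpos
  set ρ := ‖a‖ with hρ
  apply convex_rescue
  · -- convexity
    intro s t' μ hμ0 hμ1
    have hvec : a + b + (μ * s + (1 - μ) * t') • (a - b)
        = μ • (a + b + s • (a - b)) + (1 - μ) • (a + b + t' • (a - b)) := by
      module
    simp only [hf]
    rw [hvec]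
    calc ‖μ • (a + b + s • (a - b)) + (1 - μ) • (a + b + t' • (a - b))‖
        ≤ ‖μ • (a + b + s • (a - b))‖ + ‖(1 - μ) • (a + b + t' • (a - b))‖ := norm_add_le _ _
      _ = μ * ‖a + b + s • (a - b)‖ + (1 - μ) * ‖a + b + t' • (a - b)‖ := by
          rw [norm_smul, norm_smul, Real.norm_eq_abs, Real.norm_eq_abs,
            abs_of_nonneg hμ0, abs_of_nonneg (by linarith : (0:ℝ) ≤ 1 - μ)]
  · exact norm_nonneg _
  · -- the key lower bound
    intro s hs
    have hs1 : 0 < 1 + s := by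
      rcases abs_lt.mp hs with ⟨h1, h2⟩; linarith
    have hs2 : 0 < 1 - s := by
      rcases abs_lt.mp hs with ⟨h1, h2⟩; linarith
    have hss : 0 < 1 - s ^ 2 := by nlinarith
    set XX := (1 + s) • a with hXX
    set YY := (-(1 - s)) • b with hYY
    have hXne : XX ≠ 0 := smul_ne_zero (by positivity) ha0
    have hYne : YY ≠ 0 := smul_ne_zero (by intro h0; rw [neg_eq_zero] at h0; linarith) hb0
    have hXnorm : ‖XX‖ = (1 + s) * ρ := by
      rw [hXX, norm_smul, Real.norm_eq_abs, abs_of_pos hs1]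
    have hYnorm : ‖YY‖ = (1 - s) * ρ := by
      rw [hYY, norm_smul, Real.norm_eq_abs, abs_of_neg (by linarith : -(1-s) < 0), ← hab]
      ring_nf
    have hXhat : ‖XX‖⁻¹ • XX = ρ⁻¹ • a := by
      rw [hXnorm, hXX, smul_smul]
      congr 1
      field_simp
    have hYhat : ‖YY‖⁻¹ • YY = -(ρ⁻¹ • b) := by
      rw [hYnorm, hYY, smul_smul, ← neg_smul]
      congr 1
      field_simp
    have hdiff : ‖XX‖⁻¹ • XX - ‖YY‖⁻¹ • YY = ρ⁻¹ • (a + b) := by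
      rw [hXhat, hYhat]; module
    have hsub : XX - YY = a + b + s • (a - b) := by
      rw [hXX, hYY]; module
    have hmain := h XX YY hXne hYne
    rw [hdiff, hsub, hXnorm, hYnorm] at hmain
    rw [norm_smul, Real.norm_eq_abs, abs_of_pos (by positivity : (0:ℝ) < ρ⁻¹)] at hmain
    -- denominator simplification
    have hρq : (0:ℝ) < ρ := hρpos
    set c := (1 + s) ^ q + (1 - s) ^ q with hc
    have hcpos : 0 < c := by
      have := Real.rpow_pos_of_pos hs1 q
      have := Real.rpow_pos_of_pos hs2 q
      positivity
    have hden : ((1 + s) * ρ) ^ q + ((1 - s) * ρ) ^ q = ρ ^ q * c := by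
      rw [Real.mul_rpow (le_of_lt hs1) (le_of_lt hρq),
        Real.mul_rpow (le_of_lt hs2) (le_of_lt hρq), hc]
      ring
    rw [hden] at hmain
    have hdenpow : (ρ ^ q * c) ^ (1 / q) = ρ * c ^ (1 / q) := by
      rw [Real.mul_rpow (by positivity) (le_of_lt hcpos)]
      congr 1
      rw [← Real.rpow_mul (le_of_lt hρq), mul_one_div, div_self hqne, Real.rpow_one]
    rw [hdenpow] at hmain
    have h2pos : (0:ℝ) < 2 ^ ((1:ℝ) / q) := Real.rpow_pos_of_pos two_pos _
    have hcq : 0 < c ^ ((1:ℝ) / q) := Real.rpow_pos_of_pos hcpos _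
    have hfs : ‖a + b + s • (a - b)‖ = f s := rfl
    rw [hfs] at hmain
    have step : f 0 * c ^ ((1:ℝ) / q) ≤ 2 ^ ((1:ℝ) / q) * f s := by
      have h' := (le_div_iff₀ (by positivity : (0:ℝ) < ρ * c ^ ((1:ℝ)/q))).mp hmain
      calc f 0 * c ^ ((1:ℝ)/q) = ρ⁻¹ * ‖a + b‖ * (ρ * c ^ ((1:ℝ)/q)) := by
            rw [hf0]; field_simp
        _ ≤ 2 ^ ((1:ℝ)/q) * f s := h'
    -- step1 : AM-GM lower bound for c
    have hu : (0:ℝ) ≤ (1 + s) ^ q := Real.rpow_nonneg (le_of_lt hs1) q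
    have hv : (0:ℝ) ≤ (1 - s) ^ q := Real.rpow_nonneg (le_of_lt hs2) q
    have hprod : Real.sqrt ((1 + s) ^ q) * Real.sqrt ((1 - s) ^ q)
        = (1 - s ^ 2) ^ (q / 2) := by
      rw [← Real.sqrt_mul hu, ← Real.mul_rpow (le_of_lt hs1) (le_of_lt hs2),
        show (1 + s) * (1 - s) = 1 - s ^ 2 by ring,
        Real.sqrt_eq_rpow, ← Real.rpow_mul (le_of_lt hss)]
      congr 1
      ring
    have step1 : 2 * (1 - s ^ 2) ^ (q / 2) ≤ c := by
      rw [← hprod, hc]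
      nlinarith [sq_nonneg (Real.sqrt ((1 + s) ^ q) - Real.sqrt ((1 - s) ^ q)),
        Real.sq_sqrt hu, Real.sq_sqrt hv]
    have hclow : 2 ^ ((1:ℝ) / q) * (1 - s ^ 2) ^ ((1:ℝ) / 2) ≤ c ^ ((1:ℝ) / q) := by
      have e1 : 2 ^ ((1:ℝ)/q) * (1 - s ^ 2) ^ ((1:ℝ)/2)
          = (2 * (1 - s ^ 2) ^ (q / 2)) ^ ((1:ℝ)/q) := by
        rw [Real.mul_rpow (by norm_num : (0:ℝ) ≤ 2)
          (Real.rpow_nonneg (le_of_lt hss) _), ← Real.rpow_mul (le_of_lt hss)]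
        congr 2
        field_simp
      rw [e1]
      exact Real.rpow_le_rpow (by positivity) step1 (by positivity)
    -- combine
    have hhalf : (1 - s ^ 2) ≤ (1 - s ^ 2) ^ ((1:ℝ) / 2) := by
      have := Real.rpow_le_rpow_of_exponent_ge hss (by nlinarith : (1:ℝ) - s ^ 2 ≤ 1)
        (by norm_num : (1:ℝ)/2 ≤ 1)
      rwa [Real.rpow_one] at this
    have hfin1 : f 0 * (2 ^ ((1:ℝ)/q) * (1 - s ^ 2) ^ ((1:ℝ)/2))
        ≤ 2 ^ ((1:ℝ)/q) * f s := by
      calc f 0 * (2 ^ ((1:ℝ)/q) * (1 - s ^ 2) ^ ((1:ℝ)/2))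
          ≤ f 0 * c ^ ((1:ℝ)/q) :=
            mul_le_mul_of_nonneg_left hclow (norm_nonneg _)
        _ ≤ 2 ^ ((1:ℝ)/q) * f s := step
    have hfin2 : f 0 * (1 - s ^ 2) ^ ((1:ℝ)/2) ≤ f s := by
      have := (mul_le_mul_iff_right₀ h2pos).mp (by
        calc 2 ^ ((1:ℝ)/q) * (f 0 * (1 - s ^ 2) ^ ((1:ℝ)/2))
            = f 0 * (2 ^ ((1:ℝ)/q) * (1 - s ^ 2) ^ ((1:ℝ)/2)) := by ring
          _ ≤ 2 ^ ((1:ℝ)/q) * f s := hfin1)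
      exact this
    calc (1 - s ^ 2) * f 0 ≤ (1 - s ^ 2) ^ ((1:ℝ)/2) * f 0 :=
          mul_le_mul_of_nonneg_right hhalf (norm_nonneg _)
      _ = f 0 * (1 - s ^ 2) ^ ((1:ℝ)/2) := by ring
      _ ≤ f s := hfin2


end Outer

theorem al_rashed {X : Type*} [NormedAddCommGroup X] [NormedSpace ℝ X]
    (q : ℝ) (hq : q ∈ Set.Ioc (0:ℝ) 1)
    (h : ∀ x y : X, x ≠ 0 → y ≠ 0 →
      ‖‖x‖⁻¹ • x - ‖y‖⁻¹ • y‖ ≤ 2 ^ (1 / q) * ‖x - y‖ / (‖x‖ ^ q + ‖y‖ ^ q) ^ (1 / q)) :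
    ∀ x y : X, ‖x + y‖ ^ 2 + ‖x - y‖ ^ 2 = 2 * ‖x‖ ^ 2 + 2 * ‖y‖ ^ 2 := by
  intro x y
  by_cases hx : x = 0
  · subst hx; simp [norm_neg]; ring
  by_cases hdep : ∃ c : ℝ, y = c • x
  · obtain ⟨c, rfl⟩ := hdep
    have e1 : x + c • x = (1 + c) • x := by module
    have e2 : x - c • x = (1 - c) • x := by module
    rw [e1, e2, norm_smul, norm_smul, norm_smul]
    simp only [Real.norm_eq_abs]
    have h1 : |1 + c| ^ 2 = (1 + c) ^ 2 := sq_abs _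
    have h2 : |1 - c| ^ 2 = (1 - c) ^ 2 := sq_abs _
    have h3 : |c| ^ 2 = c ^ 2 := sq_abs _
    rw [mul_pow, mul_pow, mul_pow, h1, h2, h3]
    ring
  -- independent case
  have hB := propB q hq h
  set N : ℝ × ℝ → ℝ := fun z => ‖z.1 • x + z.2 • y‖ with hNdef
  have hcoord : ∀ s t : ℝ, s • x + t • y = 0 → s = 0 ∧ t = 0 := by
    intro s t hst
    by_cases ht : t = 0
    · subst ht
      simp at hst
      rcases hst with hs | hx0
      · exact ⟨hs, rfl⟩
      · exact absurd hx0 hx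
    · exfalso
      apply hdep
      refine ⟨-s / t, ?_⟩
      have : t • y = -(s • x) := by
        have : s • x + t • y - s • x = 0 - s • x := by rw [hst]
        simpa using this
      have := congrArg (fun v => (t⁻¹ : ℝ) • v) this
      simp only [smul_smul, inv_mul_cancel₀ ht, one_smul, smul_neg] at this
      rw [this]
      module
  have hN : AlRashed.GoodNorm N := by
    constructor
    · intro a b
      simp only [hNdef, Prod.fst_add, Prod.snd_add, add_smul]
      calc ‖a.1 • x + b.1 • x + (a.2 • y + b.2 • y)‖
          = ‖(a.1 • x + a.2 • y) + (b.1 • x + b.2 • y)‖ := by rw [show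
            a.1 • x + b.1 • x + (a.2 • y + b.2 • y) = a.1 • x + a.2 • y + (b.1 • x + b.2 • y)
            by module]
        _ ≤ _ := norm_add_le _ _
    · intro c a
      simp only [hNdef, Prod.smul_fst, Prod.smul_snd, smul_eq_mul]
      rw [show (c * a.1) • x + (c * a.2) • y = c • (a.1 • x + a.2 • y) by module,
        norm_smul, Real.norm_eq_abs]
    · intro a ha
      simp only [hNdef] at ha
      have := norm_eq_zero.mp ha
      obtain ⟨h1, h2⟩ := hcoord _ _ this
      exact Prod.ext h1 h2
    · intro a b hab t
      simp only [hNdef] at hab ⊢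
      have e1 : (a + b).1 • x + (a + b).2 • y = (a.1 • x + a.2 • y) + (b.1 • x + b.2 • y) := by
        simp [add_smul]; module
      have e2 : (a + b + t • (a - b)).1 • x + (a + b + t • (a - b)).2 • y
          = ((a.1 • x + a.2 • y) + (b.1 • x + b.2 • y))
            + t • ((a.1 • x + a.2 • y) - (b.1 • x + b.2 • y)) := by
        simp [add_smul, sub_smul, mul_smul]
        module
      rw [e1, e2]
      exact hB _ _ hab t
  have hcore := AlRashed.core hN (1, 0) (0, 1)
  have hx' : N (1, 0) = ‖x‖ := by simp [hNdef]
  have hy' : N (0, 1) = ‖y‖ := by simp [hNdef]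
  have hadd : N ((1, 0) + (0, 1)) = ‖x + y‖ := by
    show N (1 + 0, 0 + 1) = _
    simp [hNdef]
  have hsub : N ((1, 0) - (0, 1)) = ‖x - y‖ := by
    show N (1 - 0, 0 - 1) = _
    simp only [hNdef]
    norm_num [sub_eq_add_neg]
  rw [hadd, hsub, hx', hy'] at hcore
  exact hcore
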